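/- arXiv:0801.2115 — 6 statements merged into one kernel-verified Lean document; each statement's English description precedes it below -/
import Mathlib

section
/- For the independent Bernoulli sequence with P(Y_n=1)=1/n for n≥1, the expected number of d-strings E[Z_d] = Σ_{n≥1} E[Y_n(1-Y_{n+1})···(1-Y_{n+d-1})Y_{n+d}] equals 1/d for every d≥1. -/
open Finset

lemma prod_telescope (x : ℝ) (hx : 0 < x) :
    ∀ d : ℕ, 1 ≤ d →
      ∏ j ∈ Finset.Ico 1 d, (1 - 1 / (x + (j : ℝ))) = x / (x + (d : ℝ) - 1) := by
  intro d hd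
  induction d with
  | zero => omega
  | succ n ih =>
    rcases Nat.eq_or_lt_of_le hd with h | h
    · simp [← h, div_self hx.ne']
    · have hn : 1 ≤ n := by omega
      rw [Finset.prod_Ico_succ_top hn, ih hn]
      have h1 : x + (n : ℝ) - 1 ≠ 0 := by
        have : (1:ℝ) ≤ (n:ℝ) := by exact_mod_cast hn
        nlinarith
      have h2 : x + (n : ℝ) ≠ 0 := by positivity
      have e : 1 - 1 / (x + (n:ℝ)) = (x + (n:ℝ) - 1) / (x + (n:ℝ)) := by
        field_simp
      rw [e, div_mul_div_comm, mul_comm (x + (n:ℝ) - 1) (x + (n:ℝ)),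
        mul_div_mul_right _ _ h1]
      push_cast
      ring_nf

/-- For the independent Bernoulli sequence with `P(Y_n = 1) = 1/n` for `n ≥ 1`,
the expected number of `d`-strings,
`E[Z_d] = ∑_{n ≥ 1} E[Y_n (1-Y_{n+1}) ⋯ (1-Y_{n+d-1}) Y_{n+d}]
        = ∑_{n ≥ 1} (1/n) ∏_{j=1}^{d-1} (1 - 1/(n+j)) (1/(n+d))`,
equals `1/d` for every `d ≥ 1`. -/
theorem stmt0 (d : ℕ) (hd : 1 ≤ d) :
    ∑' n : ℕ, (1 / ((n : ℝ) + 1)) *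
        (∏ j ∈ Finset.Ico 1 d, (1 - 1 / ((n : ℝ) + 1 + (j : ℝ)))) *
        (1 / ((n : ℝ) + 1 + (d : ℝ))) = 1 / (d : ℝ) := by
  have hd' : (1:ℝ) ≤ (d:ℝ) := by exact_mod_cast hd
  have key : ∀ n : ℕ, (1 / ((n : ℝ) + 1)) *
        (∏ j ∈ Finset.Ico 1 d, (1 - 1 / ((n : ℝ) + 1 + (j : ℝ)))) *
        (1 / ((n : ℝ) + 1 + (d : ℝ)))
      = 1 / ((n : ℝ) + (d : ℝ)) - 1 / ((n : ℝ) + 1 + (d : ℝ)) := by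
    intro n
    have hx : (0:ℝ) < (n : ℝ) + 1 := by positivity
    rw [prod_telescope ((n:ℝ)+1) hx d hd]
    have h1 : (n : ℝ) + 1 + (d : ℝ) - 1 = (n : ℝ) + (d : ℝ) := by ring
    rw [h1]
    have h2 : (n : ℝ) + (d : ℝ) ≠ 0 := by positivity
    have h3 : (n : ℝ) + 1 + (d : ℝ) ≠ 0 := by positivity
    field_simp
    ring
  rw [tsum_congr key]
  have hg : Filter.Tendsto (fun n : ℕ => 1 / ((n : ℝ) + (d : ℝ))) Filter.atTop (nhds 0) := by
    have h := (Filter.tendsto_atTop_add_const_right Filter.atTop (d:ℝ)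
      tendsto_natCast_atTop_atTop).inv_tendsto_atTop
    simpa [one_div, Pi.inv_def] using h
  have hsum : HasSum (fun n : ℕ => 1 / ((n : ℝ) + (d : ℝ)) - 1 / ((n : ℝ) + 1 + (d : ℝ)))
      (1 / (d : ℝ)) := by
    rw [hasSum_iff_tendsto_nat_of_nonneg]
    · have hps : ∀ N : ℕ, ∑ n ∈ Finset.range N,
          (1 / ((n : ℝ) + (d : ℝ)) - 1 / ((n : ℝ) + 1 + (d : ℝ)))
          = 1 / (d : ℝ) - 1 / ((N : ℝ) + (d : ℝ)) := by
        intro N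
        have h := Finset.sum_range_sub' (fun n : ℕ => 1 / ((n : ℝ) + (d : ℝ))) N
        push_cast at h
        simpa using h
      simp only [hps]
      have := Filter.Tendsto.const_sub (1 / (d:ℝ)) hg
      simpa using this
    · intro n
      have h1 : (0:ℝ) < (n : ℝ) + (d : ℝ) := by positivity
      have h2 : ((n : ℝ) + (d : ℝ)) ≤ (n : ℝ) + 1 + (d : ℝ) := by linarith
      have := one_div_le_one_div_of_le h1 h2
      linarith
  exact hsum.tsum_eq
end

section
/- For the independent Bernoulli sequence Bern(a,b) with P(Y_n=1)=a/(a+b+n-1) for n≥1 (a>0, b≥0), the expected number of d-strings satisfies E[Z_d] = Σ_{n≥1} [a/(a+b+n-1)] · [∏_{j=1}^{d-1} (b+n+j-1)/(a+b+n+j-1)] · [a/(a+b+n+d-1)], and this sum is finite for every d≥1. -/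
set_option maxHeartbeats 1000000


open Finset MeasureTheory ProbabilityTheory
open scoped ENNReal

/-- For the independent Bernoulli sequence `Bern(a,b)` with `P(Y_n = 1) = a/(a+b+n-1)`
for `n ≥ 1` (`a > 0`, `b ≥ 0`), the expected number of `d`-strings satisfies
`E[Z_d] = ∑_{n ≥ 1} [a/(a+b+n-1)] ∏_{j=1}^{d-1} [(b+n+j-1)/(a+b+n+j-1)] [a/(a+b+n+d-1)]`,
and this sum is finite (the summand family is summable), for every `d ≥ 1`.
(Below the sum over `n ≥ 1` is reindexed by `n : ℕ` via `n ↦ n+1`.) -/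
theorem stmt1 {Ω : Type*} [MeasurableSpace Ω] (μ : Measure Ω) [IsProbabilityMeasure μ]
    (a b : ℝ) (ha : 0 < a) (hb : 0 ≤ b)
    (Y : ℕ → Ω → ℕ) (hmeas : ∀ n, Measurable (Y n)) (hval : ∀ n ω, Y n ω ≤ 1)
    (hindep : iIndepFun Y μ)
    (hp : ∀ n : ℕ, 1 ≤ n → μ {ω | Y n ω = 1} = ENNReal.ofReal (a / (a + b + n - 1)))
    (d : ℕ) (hd : 1 ≤ d) :
    (∫⁻ ω, (∑' n : ℕ,
        ((Y (n + 1) ω * (∏ j ∈ Finset.Ico 1 d, (1 - Y (n + 1 + j) ω)) *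
          Y (n + 1 + d) ω : ℕ) : ℝ≥0∞)) ∂μ
      = ENNReal.ofReal (∑' n : ℕ,
          (a / (a + b + n)) *
          (∏ j ∈ Finset.Ico 1 d, ((b + n + j) / (a + b + n + j))) *
          (a / (a + b + n + d))))
    ∧ Summable (fun n : ℕ =>
        (a / (a + b + n)) *
        (∏ j ∈ Finset.Ico 1 d, ((b + n + j) / (a + b + n + j))) *
        (a / (a + b + n + d))) := by
  classical
  have hab : 0 < a + b := by linarith
  have hpos : ∀ n : ℕ, (0:ℝ) < a + b + n := fun n => by positivity
  have hposd : ∀ n : ℕ, (0:ℝ) < a + b + n + d := fun n => by positivity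
  set c : ℕ → ℝ := fun n => (a / (a + b + n)) *
        (∏ j ∈ Finset.Ico 1 d, ((b + n + j) / (a + b + n + j))) *
        (a / (a + b + n + d)) with hc
  -- bounds on factors
  have hA0 : ∀ n : ℕ, 0 ≤ a / (a + b + n) := fun n => by positivity
  have hB0 : ∀ n : ℕ, 0 ≤ ∏ j ∈ Finset.Ico 1 d, ((b + n + j) / (a + b + n + j)) := by
    intro n
    refine Finset.prod_nonneg fun j _ => ?_
    have : (0:ℝ) < a + b + n + j := by positivity
    positivity
  have hB1 : ∀ n : ℕ, ∏ j ∈ Finset.Ico 1 d, ((b + n + j) / (a + b + n + j)) ≤ 1 := by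
    intro n
    refine Finset.prod_le_one (fun j _ => ?_) (fun j _ => ?_)
    · have : (0:ℝ) < a + b + n + j := by positivity
      positivity
    · rw [div_le_one (by positivity)]
      linarith
  have hC0 : ∀ n : ℕ, 0 ≤ a / (a + b + n + d) := fun n => by positivity
  have hc0 : ∀ n : ℕ, 0 ≤ c n := fun n =>
    mul_nonneg (mul_nonneg (hA0 n) (hB0 n)) (hC0 n)
  -- summability
  have hsum : Summable c := by
    rw [← summable_nat_add_iff 1]
    have hbase : Summable (fun n : ℕ => a ^ 2 * (1 / ((n:ℝ) + 1) ^ 2)) := by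
      have h1 : Summable (fun n : ℕ => 1 / ((n:ℝ)) ^ 2) :=
        Real.summable_one_div_nat_pow.2 one_lt_two
      have h2 : Summable (fun n : ℕ => 1 / (((n + 1 : ℕ)):ℝ) ^ 2) :=
        (summable_nat_add_iff 1).2 h1
      refine (h2.mul_left (a ^ 2)).congr fun n => ?_
      push_cast
      ring
    refine Summable.of_nonneg_of_le (fun n => hc0 _) (fun n => ?_) hbase
    have h1 : a / (a + b + (n + 1 : ℕ)) ≤ a / ((n:ℝ) + 1) := by
      apply div_le_div_of_nonneg_left ha.le (by positivity)
      push_cast; linarith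
    have h2 : a / (a + b + (n + 1 : ℕ) + d) ≤ a / ((n:ℝ) + 1) := by
      apply div_le_div_of_nonneg_left ha.le (by positivity)
      have : (1:ℝ) ≤ d := by exact_mod_cast hd
      push_cast; linarith
    calc c (n + 1) ≤ (a / ((n:ℝ) + 1)) * 1 * (a / ((n:ℝ) + 1)) := by
            exact mul_le_mul (mul_le_mul h1 (hB1 _) (hB0 _) (by positivity))
              h2 (hC0 _) (by positivity)
      _ = a ^ 2 * (1 / ((n:ℝ) + 1) ^ 2) := by field_simp
  refine ⟨?_, hsum⟩
  -- decomposition of the index range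
  have hd0 : (0:ℕ) ∉ insert d (Finset.Ico 1 d) := by simp; omega
  have hdd : d ∉ Finset.Ico 1 d := by simp
  have hsplit : Finset.range (d+1) = insert 0 (insert d (Finset.Ico 1 d)) := by
    ext i; simp [Finset.mem_Ico]; omega
  set u : ℕ → ℕ := fun i => if i = 0 ∨ i = d then 1 else 0 with hu
  -- probabilities of elementary events
  have hμ1 : ∀ m : ℕ, 1 ≤ m → μ (Y m ⁻¹' {1}) = ENNReal.ofReal (a / (a + b + m - 1)) := by
    intro m hm
    rw [← hp m hm]
    rfl
  have hden : ∀ m : ℕ, 1 ≤ m → (0:ℝ) < a + b + m - 1 := by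
    intro m hm
    have : (1:ℝ) ≤ m := by exact_mod_cast hm
    linarith
  have hple : ∀ m : ℕ, 1 ≤ m → a / (a + b + m - 1) ≤ 1 := by
    intro m hm
    rw [div_le_one (hden m hm)]
    have : (1:ℝ) ≤ m := by exact_mod_cast hm
    linarith
  have hμ0 : ∀ m : ℕ, 1 ≤ m → μ (Y m ⁻¹' {0}) = ENNReal.ofReal ((b + m - 1) / (a + b + m - 1)) := by
    intro m hm
    have hcomp : Y m ⁻¹' {0} = (Y m ⁻¹' {1})ᶜ := by
      ext ω
      have := hval m ω
      simp only [Set.mem_preimage, Set.mem_singleton_iff, Set.mem_compl_iff]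
      omega
    rw [hcomp, measure_compl ((hmeas m) (measurableSet_singleton _)) (measure_ne_top _ _),
      measure_univ, hμ1 m hm, ← ENNReal.ofReal_one,
      ← ENNReal.ofReal_sub _ (div_nonneg ha.le (hden m hm).le)]
    congr 1
    have h := (hden m hm).ne'
    field_simp
    ring
  -- per-term computation
  have hterm : ∀ n : ℕ, (∫⁻ ω,
      ((Y (n + 1) ω * (∏ j ∈ Finset.Ico 1 d, (1 - Y (n + 1 + j) ω)) *
          Y (n + 1 + d) ω : ℕ) : ℝ≥0∞) ∂μ) = ENNReal.ofReal (c n) := by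
    intro n
    set s : ℕ → Set Ω := fun k => Y k ⁻¹' {u (k - (n+1))} with hs
    have hsval : ∀ i : ℕ, s (n + 1 + i) = Y (n + 1 + i) ⁻¹' {u i} := by
      intro i
      simp [hs, Nat.add_sub_cancel_left]
    have hiff : ∀ y : ℕ, y ≤ 1 → (if y = 1 then 1 else 0) = y := by
      intro y hy; interval_cases y <;> simp
    have hiff0 : ∀ y : ℕ, y ≤ 1 → (if y = 0 then 1 else 0) = 1 - y := by
      intro y hy; interval_cases y <;> simp
    set E : Set Ω := ⋂ i ∈ Finset.range (d+1), s (n + 1 + i) with hE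
    have hEmeas : MeasurableSet E := by
      refine Finset.measurableSet_biInter _ fun i _ => ?_
      exact (hmeas _) (measurableSet_singleton _)
    have hpoint : ∀ ω, ((Y (n + 1) ω * (∏ j ∈ Finset.Ico 1 d, (1 - Y (n + 1 + j) ω)) *
          Y (n + 1 + d) ω : ℕ) : ℝ≥0∞) = Set.indicator E (fun _ => 1) ω := by
      intro ω
      have hnat : (Y (n + 1) ω * (∏ j ∈ Finset.Ico 1 d, (1 - Y (n + 1 + j) ω)) *
          Y (n + 1 + d) ω : ℕ) = ∏ i ∈ Finset.range (d+1),
            (if Y (n + 1 + i) ω = u i then 1 else 0) := by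
        rw [hsplit, Finset.prod_insert hd0, Finset.prod_insert hdd]
        have e0 : (if Y (n + 1 + 0) ω = u 0 then 1 else 0) = Y (n + 1) ω := by
          simp only [hu, Nat.add_zero]
          simpa using hiff _ (hval (n+1) ω)
        have ed : (if Y (n + 1 + d) ω = u d then 1 else 0) = Y (n + 1 + d) ω := by
          simp only [hu]
          simpa using hiff _ (hval (n+1+d) ω)
        have em : ∀ i ∈ Finset.Ico 1 d,
            (if Y (n + 1 + i) ω = u i then 1 else 0) = 1 - Y (n + 1 + i) ω := by
          intro i hi
          simp only [Finset.mem_Ico] at hi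
          have hu0 : u i = 0 := by simp only [hu]; rw [if_neg]; omega
          rw [hu0]
          exact hiff0 _ (hval _ ω)
        rw [e0, ed, Finset.prod_congr rfl em]
        ring
      rw [hnat]
      have hmem : ω ∈ E ↔ ∀ i ∈ Finset.range (d+1), Y (n + 1 + i) ω = u i := by
        simp [hE, hs, Nat.add_sub_cancel_left]
      rw [Set.indicator_apply]
      push_cast [Finset.prod_boole]
      by_cases h : ∀ i ∈ Finset.range (d+1), Y (n + 1 + i) ω = u i
      · rw [if_pos h, if_pos (hmem.2 h)]
      · rw [if_neg h, if_neg (fun hω => h (hmem.1 hω))]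
    calc (∫⁻ ω, ((Y (n + 1) ω * (∏ j ∈ Finset.Ico 1 d, (1 - Y (n + 1 + j) ω)) *
            Y (n + 1 + d) ω : ℕ) : ℝ≥0∞) ∂μ)
        = ∫⁻ ω, Set.indicator E (fun _ => (1:ℝ≥0∞)) ω ∂μ := by
          exact lintegral_congr hpoint
      _ = 1 * μ E := lintegral_indicator_const hEmeas 1
      _ = μ E := one_mul _
      _ = ∏ i ∈ Finset.range (d+1), μ (s (n + 1 + i)) := by
          have hinj : ∀ x ∈ Finset.range (d+1), ∀ y ∈ Finset.range (d+1),
              n + 1 + x = n + 1 + y → x = y := by intro x _ y _ h; omega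
          have himg : E = ⋂ k ∈ (Finset.range (d+1)).image (fun i => n + 1 + i), s k := by
            rw [Finset.set_biInter_finset_image]
          rw [himg, hindep.meas_biInter (fun k _ =>
            ⟨{u (k - (n+1))}, measurableSet_singleton _, rfl⟩),
            Finset.prod_image hinj]
      _ = ENNReal.ofReal (c n) := by
          have hval1 : ∀ m : ℕ, (a + b + (↑(n + 1 + m)) - 1 : ℝ) = a + b + n + m := by
            intro m; push_cast; ring
          have h0 : μ (s (n + 1 + 0)) = ENNReal.ofReal (a / (a + b + n)) := by
            rw [hsval, show u 0 = 1 by simp [hu], hμ1 _ (by omega), hval1 0]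
            norm_num
          have hdval : μ (s (n + 1 + d)) = ENNReal.ofReal (a / (a + b + n + d)) := by
            rw [hsval, show u d = 1 by simp [hu], hμ1 _ (by omega), hval1 d]
          have hmid : ∀ i ∈ Finset.Ico 1 d,
              μ (s (n + 1 + i)) = ENNReal.ofReal ((b + n + i) / (a + b + n + i)) := by
            intro i hi
            simp only [Finset.mem_Ico] at hi
            have hu0 : u i = 0 := by simp only [hu]; rw [if_neg]; omega
            rw [hsval, hu0, hμ0 _ (by omega)]
            congr 1
            · push_cast; ring_nf
          rw [hsplit, Finset.prod_insert hd0, Finset.prod_insert hdd, h0, hdval,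
            Finset.prod_congr rfl hmid]
          rw [← ENNReal.ofReal_prod_of_nonneg (fun i hi => by
            have : (0:ℝ) < a + b + n + i := by positivity
            positivity)]
          rw [← ENNReal.ofReal_mul (by positivity), ← ENNReal.ofReal_mul (by positivity)]
          congr 1
          ring
  have haem : ∀ n : ℕ, AEMeasurable (fun ω =>
      ((Y (n + 1) ω * (∏ j ∈ Finset.Ico 1 d, (1 - Y (n + 1 + j) ω)) *
          Y (n + 1 + d) ω : ℕ) : ℝ≥0∞)) μ := by
    intro n
    have h1 : Measurable fun ω => (Y (n + 1) ω *
        (∏ j ∈ Finset.Ico 1 d, (1 - Y (n + 1 + j) ω)) * Y (n + 1 + d) ω : ℕ) := by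
      refine Measurable.mul (Measurable.mul (hmeas _) ?_) (hmeas _)
      exact Finset.measurable_prod _ fun j _ =>
        (measurable_from_nat (f := fun k : ℕ => 1 - k)).comp (hmeas _)
    exact (measurable_from_nat.comp h1).aemeasurable
  rw [lintegral_tsum haem]
  rw [ENNReal.ofReal_tsum_of_nonneg hc0 hsum]
  exact tsum_congr hterm
end

section
/- Let A_n = {0 < x_0 < x_1 < ··· < x_n < 1} ⊂ ℝ^{n+1}, let a,b>0, and let k_0,...,k_n be positive integers with partial sums K_0=k_0, K_s = K_{s-1}+k_s. Then ∫_{A_n} x_0^{b+k_0-2} ∏_{i=1}^n x_i^{k_i-1} (1-x_n)^a dx_0···dx_n = B(b+K_n-1, a+1) / ∏_{s=0}^{n-1}(b+K_s-1), where B denotes the Beta function. -/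
open Finset MeasureTheory
open scoped ENNReal

/-- Partial sums `K_s = k_0 + k_1 + ⋯ + k_s`. -/
def partialSum (k : ℕ → ℕ) (s : ℕ) : ℕ := ∑ i ∈ Finset.range (s + 1), k i


lemma cons_strictMono_iff {n : ℕ} {t : ℝ} {y : Fin (n + 1) → ℝ} :
    StrictMono (Fin.cons t y : Fin (n + 2) → ℝ) ↔ t < y 0 ∧ StrictMono y := by
  rw [Fin.strictMono_iff_lt_succ, Fin.strictMono_iff_lt_succ]
  constructor
  · intro h
    refine ⟨by simpa using h 0, fun j => ?_⟩
    have := h j.succ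
    rwa [Fin.cons_succ, Fin.castSucc_fin_succ, Fin.cons_succ] at this
  · rintro ⟨h0, h⟩ i
    induction i using Fin.cases with
    | zero => simpa using h0
    | succ j => rw [Fin.cons_succ, Fin.castSucc_fin_succ, Fin.cons_succ]; exact h j

lemma prod_filter_ne_zero {n : ℕ} (g : Fin (n + 2) → ℝ) :
    ∏ i ∈ Finset.univ.filter (fun i : Fin (n + 2) => i ≠ 0), g i
      = ∏ j : Fin (n + 1), g j.succ := by
  rw [Finset.filter_ne']
  exact Finset.prod_bij' (fun i _ => i.pred (by simp_all [Finset.mem_erase]))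
    (fun j _ => j.succ) (by simp) (fun j _ => by simp [Finset.mem_erase, Fin.succ_ne_zero]) (by simp) (by simp) (by simp)

lemma measurableSet_T (n : ℕ) :
    MeasurableSet {x : Fin (n + 1) → ℝ | StrictMono x ∧ 0 < x 0 ∧ x (Fin.last n) < 1} := by
  have h1 : {x : Fin (n + 1) → ℝ | StrictMono x}
      = ⋂ i : Fin n, {x : Fin (n + 1) → ℝ | x i.castSucc < x i.succ} := by
    ext x; simp [Fin.strictMono_iff_lt_succ, Set.mem_iInter]
  have : {x : Fin (n + 1) → ℝ | StrictMono x ∧ 0 < x 0 ∧ x (Fin.last n) < 1}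
      = {x : Fin (n + 1) → ℝ | StrictMono x} ∩ {x | 0 < x 0} ∩ {x | x (Fin.last n) < 1} := by
    ext x; simp [and_assoc]
  rw [this, h1]
  refine MeasurableSet.inter (MeasurableSet.inter ?_ ?_) ?_
  · exact MeasurableSet.iInter fun i =>
      measurableSet_lt (measurable_pi_apply _) (measurable_pi_apply _)
  · exact measurableSet_lt measurable_const (measurable_pi_apply _)
  · exact measurableSet_lt (measurable_pi_apply _) measurable_const

lemma measurable_integrand {n : ℕ} (c a : ℝ) (k : ℕ → ℕ) :
    Measurable (fun x : Fin (n + 1) → ℝ =>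
      x 0 ^ c *
      (∏ i ∈ Finset.univ.filter (fun i : Fin (n + 1) => i ≠ 0), x i ^ (k i.val - 1)) *
      (1 - x (Fin.last n)) ^ a) := by
  refine Measurable.mul (Measurable.mul ?_ ?_) ?_
  · exact (measurable_pi_apply 0).pow measurable_const
  · exact Finset.measurable_prod _ fun i _ => (measurable_pi_apply i).pow_const _
  · exact (measurable_const.sub (measurable_pi_apply _)).pow measurable_const

lemma measurable_cons {n : ℕ} :
    Measurable (fun p : ℝ × (Fin (n + 1) → ℝ) => (Fin.cons p.1 p.2 : Fin (n + 2) → ℝ)) := by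
  refine measurable_pi_iff.2 fun i => ?_
  induction i using Fin.cases with
  | zero => simpa using measurable_fst
  | succ j => simpa using (show Measurable fun p : ℝ × (Fin (n + 1) → ℝ) => p.2 j from (measurable_pi_apply j).comp measurable_snd)


lemma betaCpx_eq (u v : ℝ) :
    Complex.betaIntegral u v =
      ((∫ x in (0:ℝ)..1, x ^ (u - 1) * (1 - x) ^ (v - 1) : ℝ) : ℂ) := by
  rw [Complex.betaIntegral, ← intervalIntegral.integral_ofReal]
  refine intervalIntegral.integral_congr fun x hx => ?_
  rw [Set.uIcc_of_le (by norm_num : (0:ℝ) ≤ 1)] at hx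
  have h0 : (0:ℝ) ≤ x := hx.1
  have h1 : (0:ℝ) ≤ 1 - x := by linarith [hx.2]
  have e1 : ((u:ℂ) - 1) = ((u - 1 : ℝ) : ℂ) := by push_cast; ring
  have e2 : ((v:ℂ) - 1) = ((v - 1 : ℝ) : ℂ) := by push_cast; ring
  have e3 : (1 - (x:ℂ)) = ((1 - x : ℝ) : ℂ) := by push_cast; ring
  rw [e1, e2, e3, ← Complex.ofReal_cpow h0, ← Complex.ofReal_cpow h1, ← Complex.ofReal_mul]

lemma realBeta (u v : ℝ) (hu : 0 < u) (hv : 0 < v) :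
    ∫ x in Set.Ioo (0:ℝ) 1, x ^ (u - 1) * (1 - x) ^ (v - 1)
      = Real.Gamma u * Real.Gamma v / Real.Gamma (u + v) := by
  have h := Complex.Gamma_mul_Gamma_eq_betaIntegral
    (s := (u:ℂ)) (t := (v:ℂ)) (by simpa using hu) (by simpa using hv)
  rw [betaCpx_eq] at h
  have hcast : ((u:ℂ) + v) = ((u + v : ℝ) : ℂ) := by push_cast; ring
  rw [hcast, Complex.Gamma_ofReal, Complex.Gamma_ofReal, Complex.Gamma_ofReal,
    ← Complex.ofReal_mul, ← Complex.ofReal_mul] at h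
  have h' : Real.Gamma u * Real.Gamma v
      = Real.Gamma (u + v) * ∫ x in (0:ℝ)..1, x ^ (u - 1) * (1 - x) ^ (v - 1) :=
    Complex.ofReal_injective h
  have hΓ : Real.Gamma (u + v) ≠ 0 := (Real.Gamma_pos_of_pos (by linarith)).ne'
  rw [intervalIntegral.integral_of_le (by norm_num : (0:ℝ) ≤ 1),
    MeasureTheory.integral_Ioc_eq_integral_Ioo] at h'
  field_simp at h' ⊢
  linarith [h']

lemma betaIntegrable (u v : ℝ) (hu : 0 < u) (hv : 0 < v) :
    IntegrableOn (fun x : ℝ => x ^ (u - 1) * (1 - x) ^ (v - 1)) (Set.Ioo 0 1) := by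
  have h := Complex.betaIntegral_convergent (u := (u:ℂ)) (v := (v:ℂ))
    (by simpa using hu) (by simpa using hv)
  rw [intervalIntegrable_iff_integrableOn_Ioc_of_le (by norm_num : (0:ℝ) ≤ 1)] at h
  have hre : IntegrableOn (fun x : ℝ =>
      ((x:ℂ) ^ ((u:ℂ) - 1) * (1 - (x:ℂ)) ^ ((v:ℂ) - 1)).re) (Set.Ioc 0 1) := h.re
  refine (hre.mono_set Set.Ioo_subset_Ioc_self).congr_fun (fun x hx => ?_) measurableSet_Ioo
  have h0 : (0:ℝ) ≤ x := hx.1.le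
  have h1 : (0:ℝ) ≤ 1 - x := by linarith [hx.2.le]
  have e1 : ((u:ℂ) - 1) = ((u - 1 : ℝ) : ℂ) := by push_cast; ring
  have e2 : ((v:ℂ) - 1) = ((v - 1 : ℝ) : ℂ) := by push_cast; ring
  have e3 : (1 - (x:ℂ)) = ((1 - x : ℝ) : ℂ) := by push_cast; ring
  beta_reduce
  rw [e1, e2, e3, ← Complex.ofReal_cpow h0, ← Complex.ofReal_cpow h1, ← Complex.ofReal_mul,
    Complex.ofReal_re]

lemma partial_ge (k : ℕ → ℕ) (hk : ∀ i, 1 ≤ k i) (s : ℕ) : 1 ≤ partialSum k s :=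
  le_trans (hk 0) (Finset.single_le_sum (f := k) (fun i _ => Nat.zero_le _)
    (Finset.mem_range.2 (Nat.succ_pos s)))

lemma key (a : ℝ) (ha : 0 < a) :
    ∀ n : ℕ, ∀ b : ℝ, 0 < b → ∀ k : ℕ → ℕ, (∀ i, 1 ≤ k i) →
    ∫⁻ x in {x : Fin (n + 1) → ℝ | StrictMono x ∧ 0 < x 0 ∧ x (Fin.last n) < 1},
      ENNReal.ofReal ((x 0 ^ (b + (k 0 : ℝ) - 2)) *
        (∏ i ∈ Finset.univ.filter (fun i : Fin (n + 1) => i ≠ 0), x i ^ (k i.val - 1)) *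
        ((1 - x (Fin.last n)) ^ a))
      = ENNReal.ofReal ((Real.Gamma (b + (partialSum k n : ℝ) - 1) * Real.Gamma (a + 1) /
          Real.Gamma ((b + (partialSum k n : ℝ) - 1) + (a + 1))) /
        ∏ s ∈ Finset.range n, (b + (partialSum k s : ℝ) - 1)) := by
  intro n
  induction n with
  | zero =>
    intro b hb k hk
    have hsm : ∀ x : Fin 1 → ℝ, StrictMono x := fun x i j hij =>
      absurd hij (by simp [Subsingleton.elim i j])
    have hfilter : Finset.univ.filter (fun i : Fin 1 => i ≠ 0) = ∅ := by decide
    have hset : {x : Fin (0 + 1) → ℝ | StrictMono x ∧ 0 < x 0 ∧ x (Fin.last 0) < 1}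
        = (MeasurableEquiv.funUnique (Fin 1) ℝ) ⁻¹' (Set.Ioo 0 1) := by
      ext x
      simp [hsm x, Fin.last, MeasurableEquiv.funUnique, Set.mem_Ioo]
    have hmp := (volume_preserving_funUnique (Fin 1) ℝ).setLIntegral_comp_preimage_emb
      (MeasurableEquiv.measurableEmbedding _)
      (fun t : ℝ => ENNReal.ofReal (t ^ (b + (k 0 : ℝ) - 2) * (1 - t) ^ a)) (Set.Ioo 0 1)
    rw [hfilter] at *
    simp only [Finset.prod_empty, mul_one] at *
    rw [hset]
    have heq : (fun x : Fin 1 → ℝ =>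
        ENNReal.ofReal (x 0 ^ (b + (k 0 : ℝ) - 2) * (1 - x (Fin.last 0)) ^ a))
        = (fun x : Fin 1 → ℝ => ENNReal.ofReal ((MeasurableEquiv.funUnique (Fin 1) ℝ x) ^ (b + (k 0 : ℝ) - 2)
            * (1 - MeasurableEquiv.funUnique (Fin 1) ℝ x) ^ a)) := rfl
    rw [heq]
    refine hmp.trans ?_
    have hu : (0:ℝ) < b + (k 0 : ℝ) - 1 := by
      have : (1:ℝ) ≤ (k 0 : ℝ) := by exact_mod_cast hk 0
      linarith
    have hexp : (fun t : ℝ => t ^ (b + (k 0 : ℝ) - 2) * (1 - t) ^ a)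
        = fun t : ℝ => t ^ ((b + (k 0 : ℝ) - 1) - 1) * (1 - t) ^ ((a + 1) - 1) := by
      funext t
      rw [show (b + (k 0 : ℝ) - 1) - 1 = b + (k 0 : ℝ) - 2 by ring, show a + 1 - 1 = a by ring]
    have hnn : 0 ≤ᵐ[volume.restrict (Set.Ioo (0:ℝ) 1)]
        (fun t : ℝ => t ^ (b + (k 0 : ℝ) - 2) * (1 - t) ^ a) := by
      refine (ae_restrict_iff' measurableSet_Ioo).2 (Filter.Eventually.of_forall fun t ht => ?_)
      exact mul_nonneg (Real.rpow_nonneg ht.1.le _) (Real.rpow_nonneg (by linarith [ht.2]) _)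
    rw [← ofReal_integral_eq_lintegral_ofReal (by rw [hexp]; exact betaIntegrable _ _ hu (by linarith)) hnn]
    rw [hexp, realBeta _ _ hu (by linarith)]
    simp [partialSum, Finset.sum_range_one]
  | succ n ih =>
    intro b hb k hk
    have hk0 : (1 : ℝ) ≤ (k 0 : ℝ) := by exact_mod_cast hk 0
    set p : ℝ := b + (k 0 : ℝ) - 2 with hpdef
    have hp1 : p + 1 = b + (k 0 : ℝ) - 1 := by rw [hpdef]; ring
    have hppos : (0 : ℝ) < p + 1 := by rw [hp1]; linarith
    have hpneg : (-1 : ℝ) < p := by linarith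
    set b' : ℝ := b + (k 0 : ℝ) with hb'def
    have hb' : (0 : ℝ) < b' := by rw [hb'def]; linarith
    set k' : ℕ → ℕ := fun m => k (m + 1) with hk'def
    have hk' : ∀ i, 1 ≤ k' i := fun i => hk _
    set F : (Fin (n + 2) → ℝ) → ℝ := fun x =>
      (x 0 ^ (b + (k 0 : ℝ) - 2)) *
      (∏ i ∈ Finset.univ.filter (fun i : Fin (n + 2) => i ≠ 0), x i ^ (k i.val - 1)) *
      ((1 - x (Fin.last (n + 1))) ^ a) with hFdef
    set F2 : (Fin (n + 1) → ℝ) → ℝ := fun y =>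
      (y 0 ^ (b' + (k' 0 : ℝ) - 2)) *
      (∏ i ∈ Finset.univ.filter (fun i : Fin (n + 1) => i ≠ 0), y i ^ (k' i.val - 1)) *
      ((1 - y (Fin.last n)) ^ a) with hF2def
    set T : Set (Fin (n + 1) → ℝ) :=
      {y | StrictMono y ∧ 0 < y 0 ∧ y (Fin.last n) < 1} with hTdef
    set U : Set (ℝ × (Fin (n + 1) → ℝ)) :=
      {q | (StrictMono q.2 ∧ 0 < q.2 0 ∧ q.2 (Fin.last n) < 1) ∧ 0 < q.1 ∧ q.1 < q.2 0}
      with hUdef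
    set G : ℝ × (Fin (n + 1) → ℝ) → ℝ≥0∞ :=
      fun q => ENNReal.ofReal (F (Fin.cons q.1 q.2)) with hGdef
    -- Step A : transfer to the product space
    have hmp := measurePreserving_piFinSuccAbove (fun _ : Fin (n + 2) => (volume : Measure ℝ)) 0
    have hA := hmp.setLIntegral_comp_preimage_emb
      (MeasurableEquiv.measurableEmbedding _) G U
    have hpre : (MeasurableEquiv.piFinSuccAbove (fun _ : Fin (n + 2) => ℝ) 0) ⁻¹' U
        = {x : Fin (n + 1 + 1) → ℝ | StrictMono x ∧ 0 < x 0 ∧ x (Fin.last (n + 1)) < 1} := by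
      ext x
      have htail := @cons_strictMono_iff n (x 0) (Fin.tail x)
      rw [Fin.cons_self_tail] at htail
      simp only [Set.mem_preimage, Set.mem_setOf_eq, MeasurableEquiv.piFinSuccAbove_apply,
        Fin.insertNthEquiv, Equiv.coe_fn_symm_mk, hUdef, Fin.removeNth, Fin.zero_succAbove]
      constructor
      · rintro ⟨⟨h1, h2, h3⟩, h4, h5⟩
        refine ⟨htail.2 ⟨h5, h1⟩, h4, ?_⟩
        simpa [Fin.tail, Fin.succ_last] using h3
      · rintro ⟨h1, h2, h3⟩
        have h' := htail.1 h1
        exact ⟨⟨h'.2, lt_trans h2 h'.1, by simpa [Fin.tail, Fin.succ_last] using h3⟩, h2, h'.1⟩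
    have hGe : ∀ x : Fin (n + 2) → ℝ,
        G ((MeasurableEquiv.piFinSuccAbove (fun _ : Fin (n + 2) => ℝ) 0) x)
          = ENNReal.ofReal (F x) := by
      intro x
      have : (Fin.cons (x 0) (Fin.removeNth 0 x) : Fin (n + 2) → ℝ) = x := by
        rw [show Fin.removeNth 0 x = Fin.tail x from rfl, Fin.cons_self_tail]
      simp only [hGdef, MeasurableEquiv.piFinSuccAbove_apply, Fin.insertNthEquiv,
        Equiv.coe_fn_symm_mk, this]
    rw [hpre] at hA
    simp only [hGe] at hA
    have hvolpi : (volume : Measure (Fin (n + 2) → ℝ)) = Measure.pi fun _ => volume :=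
      volume_pi
    rw [← hvolpi] at hA
    rw [show (fun x : Fin (n+1+1) → ℝ => ENNReal.ofReal ((x 0 ^ (b + (k 0 : ℝ) - 2)) *
          (∏ i ∈ Finset.univ.filter (fun i : Fin (n + 1 + 1) => i ≠ 0), x i ^ (k i.val - 1)) *
          ((1 - x (Fin.last (n + 1))) ^ a))) = fun x => ENNReal.ofReal (F x) from rfl, hA]
    have hvol2 : (Measure.pi fun _ : Fin (n + 1) => (volume : Measure ℝ)) = volume :=
      volume_pi.symm
    rw [hvol2]
    -- Step B: Tonelli
    have hUmeas : MeasurableSet U := by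
      have h1 : U = (Prod.snd ⁻¹' T) ∩
          ({q : ℝ × (Fin (n + 1) → ℝ) | 0 < q.1} ∩ {q | q.1 < q.2 0}) := by
        ext q
        simp only [hUdef, hTdef, Set.mem_setOf_eq, Set.mem_inter_iff, Set.mem_preimage]
      rw [h1]
      exact (measurable_snd (measurableSet_T n)).inter
        ((measurableSet_lt measurable_const measurable_fst).inter
          (measurableSet_lt measurable_fst ((measurable_pi_apply 0).comp measurable_snd)))
    have hGmeas : Measurable G :=
      ENNReal.measurable_ofReal.comp
        ((measurable_integrand (b + (k 0 : ℝ) - 2) a k).comp measurable_cons)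
    have hB : (∫⁻ q in U, G q ∂((volume : Measure ℝ).prod (volume : Measure (Fin (n + 1) → ℝ))))
        = ∫⁻ y in T, ∫⁻ t in Set.Ioo 0 (y 0), G (t, y) := by
      rw [← lintegral_indicator hUmeas]
      rw [lintegral_prod_symm _ (hGmeas.indicator hUmeas).aemeasurable]
      rw [← lintegral_indicator (measurableSet_T n)]
      refine lintegral_congr fun y => ?_
      by_cases hy : y ∈ T
      · rw [Set.indicator_of_mem hy, ← lintegral_indicator measurableSet_Ioo]
        refine lintegral_congr fun t => ?_
        by_cases ht : t ∈ Set.Ioo 0 (y 0)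
        · rw [Set.indicator_of_mem ht,
            Set.indicator_of_mem (show (t, y) ∈ U from ⟨hy, ht.1, ht.2⟩)]
        · rw [Set.indicator_of_notMem ht,
            Set.indicator_of_notMem (show (t, y) ∉ U from fun hmem => ht ⟨hmem.2.1, hmem.2.2⟩)]
      · rw [Set.indicator_of_notMem hy]
        have hz : ∀ t : ℝ, U.indicator G (t, y) = 0 := fun t =>
          Set.indicator_of_notMem (fun hmem => hy hmem.1) _
        simp [hz]
    rw [hB]
    -- Step C: inner integral
    have hinner : ∀ y ∈ T, (∫⁻ t in Set.Ioo 0 (y 0), G (t, y))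
        = ENNReal.ofReal ((1 / (p + 1)) * F2 y) := by
      rintro y ⟨hysm, hy0, hyl⟩
      have hypos : ∀ j, 0 < y j := fun j => lt_of_lt_of_le hy0 (hysm.monotone (Fin.zero_le j))
      set Cval : ℝ := (∏ j : Fin (n + 1), y j ^ (k (j.val + 1) - 1)) * (1 - y (Fin.last n)) ^ a
        with hCvaldef
      have hCnn : 0 ≤ Cval :=
        mul_nonneg (Finset.prod_nonneg fun j _ => pow_nonneg (hypos j).le _)
          (Real.rpow_nonneg (by linarith) _)
      have hGty : ∀ t : ℝ, G (t, y) = ENNReal.ofReal (t ^ p * Cval) := by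
        intro t
        simp only [hGdef, hFdef]
        rw [prod_filter_ne_zero (fun i : Fin (n + 2) =>
          (Fin.cons t y : Fin (n + 2) → ℝ) i ^ (k i.val - 1))]
        rw [show (Fin.last (n + 1)) = (Fin.last n).succ from (Fin.succ_last n).symm]
        simp only [Fin.cons_zero, Fin.cons_succ, Fin.val_succ]
        rw [hCvaldef, mul_assoc]
      have hInt : IntegrableOn (fun t : ℝ => t ^ p * Cval) (Set.Ioo 0 (y 0)) := by
        have h1 : IntervalIntegrable (fun t : ℝ => t ^ p) volume 0 (y 0) :=
          intervalIntegral.intervalIntegrable_rpow' hpneg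
        have h2 := (intervalIntegrable_iff_integrableOn_Ioc_of_le hy0.le).1 h1
        exact (h2.mono_set Set.Ioo_subset_Ioc_self).mul_const _
      have hnn2 : 0 ≤ᵐ[volume.restrict (Set.Ioo 0 (y 0))] fun t : ℝ => t ^ p * Cval :=
        (ae_restrict_iff' measurableSet_Ioo).2 (Filter.Eventually.of_forall fun t ht =>
          mul_nonneg (Real.rpow_nonneg ht.1.le _) hCnn)
      have hval : ∫ t in Set.Ioo 0 (y 0), t ^ p * Cval = (1 / (p + 1)) * F2 y := by
        rw [MeasureTheory.integral_mul_const, ← MeasureTheory.integral_Ioc_eq_integral_Ioo,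
          ← intervalIntegral.integral_of_le hy0.le, integral_rpow (Or.inl hpneg),
          Real.zero_rpow hppos.ne', sub_zero]
        have hy0exp : y 0 ^ (b' + ((k 1 : ℕ) : ℝ) - 2)
            = y 0 ^ (p + 1) * y 0 ^ ((k 1 - 1 : ℕ)) := by
          rw [← Real.rpow_natCast (y 0) (k 1 - 1), ← Real.rpow_add (hypos 0)]
          congr 1
          rw [Nat.cast_sub (hk 1), hp1, hb'def]
          push_cast
          ring
        simp only [hF2def, hk'def, zero_add]
        rw [Finset.filter_ne', hy0exp, hCvaldef,
          ← Finset.mul_prod_erase Finset.univ _ (Finset.mem_univ (0 : Fin (n + 1))),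
          Fin.val_zero, zero_add]
        ring
      calc ∫⁻ t in Set.Ioo 0 (y 0), G (t, y)
          = ∫⁻ t in Set.Ioo 0 (y 0), ENNReal.ofReal (t ^ p * Cval) :=
            lintegral_congr fun t => hGty t
        _ = ENNReal.ofReal (∫ t in Set.Ioo 0 (y 0), t ^ p * Cval) :=
            (ofReal_integral_eq_lintegral_ofReal hInt hnn2).symm
        _ = ENNReal.ofReal ((1 / (p + 1)) * F2 y) := by rw [hval]
    rw [setLIntegral_congr_fun (measurableSet_T n)
      (fun y hy => hinner y hy)]
    -- Step D: pull out the constant and apply the induction hypothesis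
    have hfrac : (0:ℝ) ≤ 1 / (p + 1) := by positivity
    simp_rw [ENNReal.ofReal_mul hfrac]
    rw [lintegral_const_mul' _ _ ENNReal.ofReal_ne_top]
    rw [show (fun y : Fin (n+1) → ℝ => ENNReal.ofReal (F2 y)) = fun y => ENNReal.ofReal
      ((y 0 ^ (b' + (k' 0 : ℝ) - 2)) *
       (∏ i ∈ Finset.univ.filter (fun i : Fin (n + 1) => i ≠ 0), y i ^ (k' i.val - 1)) *
       ((1 - y (Fin.last n)) ^ a)) from rfl]
    rw [ih b' hb' k' hk']
    rw [← ENNReal.ofReal_mul hfrac]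
    congr 1
    have hps : ∀ s : ℕ, (partialSum k' s : ℝ) = (partialSum k (s + 1) : ℝ) - (k 0 : ℝ) := by
      intro s
      have h : partialSum k (s + 1) = partialSum k' s + k 0 := by
        simp only [partialSum, hk'def]
        rw [Finset.sum_range_succ']
      rw [h]; push_cast; ring
    have hg1 : b' + (partialSum k' n : ℝ) - 1 = b + (partialSum k (n + 1) : ℝ) - 1 := by
      rw [hps, hb'def]; ring
    have hK0 : (partialSum k 0 : ℝ) = (k 0 : ℝ) := by simp [partialSum]
    have hP : (∏ s ∈ Finset.range n, (b' + (partialSum k' s : ℝ) - 1))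
        = ∏ s ∈ Finset.range n, (b + (k 0 : ℝ) + (partialSum k' s : ℝ) - 1) :=
      Finset.prod_congr rfl fun s _ => by rw [hb'def]
    have hprod : ∏ s ∈ Finset.range (n + 1), (b + (partialSum k s : ℝ) - 1)
        = (∏ s ∈ Finset.range n, (b + (k 0 : ℝ) + (partialSum k' s : ℝ) - 1))
          * (b + (partialSum k 0 : ℝ) - 1) := by
      rw [Finset.prod_range_succ']
      congr 1
      refine Finset.prod_congr rfl fun s _ => ?_
      rw [hps]; ring
    rw [hg1, hP, hprod, hK0, hp1, show b' - 1 = b + (k 0 : ℝ) - 1 from by rw [hb'def]]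
    rw [one_div_mul_eq_div, ← div_div]

/-- Let `A_n = {0 < x_0 < x_1 < ⋯ < x_n < 1} ⊆ ℝ^{n+1}`, `a, b > 0`, and `k_0, …, k_n`
positive integers with partial sums `K_s`.  Then
`∫_{A_n} x_0^{b+k_0-2} ∏_{i=1}^n x_i^{k_i-1} (1-x_n)^a dx = B(b+K_n-1, a+1) / ∏_{s=0}^{n-1} (b+K_s-1)`,
where `B(α,β) = Γ(α)Γ(β)/Γ(α+β)` is the Beta function. -/
theorem stmt2 (n : ℕ) (a b : ℝ) (ha : 0 < a) (hb : 0 < b)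
    (k : ℕ → ℕ) (hk : ∀ i, 1 ≤ k i) :
    ∫ x in {x : Fin (n + 1) → ℝ | StrictMono x ∧ 0 < x 0 ∧ x (Fin.last n) < 1},
        (x 0 ^ (b + (k 0 : ℝ) - 2)) *
        (∏ i ∈ Finset.univ.filter (fun i : Fin (n + 1) => i ≠ 0), x i ^ (k i.val - 1)) *
        ((1 - x (Fin.last n)) ^ a)
      = (Real.Gamma (b + (partialSum k n : ℝ) - 1) * Real.Gamma (a + 1) /
          Real.Gamma ((b + (partialSum k n : ℝ) - 1) + (a + 1))) /
        ∏ s ∈ Finset.range n, (b + (partialSum k s : ℝ) - 1) := by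
  have hnn : 0 ≤ᵐ[volume.restrict
      {x : Fin (n + 1) → ℝ | StrictMono x ∧ 0 < x 0 ∧ x (Fin.last n) < 1}]
      fun x : Fin (n + 1) → ℝ =>
        (x 0 ^ (b + (k 0 : ℝ) - 2)) *
        (∏ i ∈ Finset.univ.filter (fun i : Fin (n + 1) => i ≠ 0), x i ^ (k i.val - 1)) *
        ((1 - x (Fin.last n)) ^ a) := by
    refine (ae_restrict_iff' (measurableSet_T n)).2 (Filter.Eventually.of_forall fun x hx => ?_)
    obtain ⟨hsm, h0, h1⟩ := hx
    have hxi : ∀ i, 0 ≤ x i := fun i => le_trans h0.le (hsm.monotone (Fin.zero_le i))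
    exact mul_nonneg (mul_nonneg (Real.rpow_nonneg (hxi 0) _)
      (Finset.prod_nonneg fun i _ => pow_nonneg (hxi i) _))
      (Real.rpow_nonneg (by linarith) _)
  rw [MeasureTheory.integral_eq_lintegral_of_nonneg_ae hnn
    ((measurable_integrand (b + (k 0 : ℝ) - 2) a k).aestronglyMeasurable)]
  rw [key a ha n b hb k hk]
  have hKpos : ∀ s : ℕ, (0:ℝ) < b + (partialSum k s : ℝ) - 1 := by
    intro s
    have : (1:ℝ) ≤ (partialSum k s : ℝ) := by exact_mod_cast partial_ge k hk s
    linarith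
  have hRHS : (0:ℝ) ≤ (Real.Gamma (b + (partialSum k n : ℝ) - 1) * Real.Gamma (a + 1) /
      Real.Gamma ((b + (partialSum k n : ℝ) - 1) + (a + 1))) /
      ∏ s ∈ Finset.range n, (b + (partialSum k s : ℝ) - 1) := by
    have hg1 := Real.Gamma_pos_of_pos (hKpos n)
    have hg2 := Real.Gamma_pos_of_pos (show (0:ℝ) < a + 1 by linarith)
    have hg3 := Real.Gamma_pos_of_pos (show (0:ℝ) < (b + (partialSum k n : ℝ) - 1) + (a + 1)
      by have := hKpos n; linarith)
    exact div_nonneg (div_nonneg (mul_nonneg hg1.le hg2.le) hg3.le)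
      (Finset.prod_nonneg fun s _ => (hKpos s).le)
  rw [ENNReal.toReal_ofReal hRHS]
end

section
/- If Ẑ_1 denotes the count of 1-strings in Bern(a,b) (a>0, b>0), then E[Ẑ_1] = a²/(a+b) and E[Ẑ_1²] = a³(a+1)/[(a+b)(a+b+1)] + a²/(a+b). -/
open Finset MeasureTheory ProbabilityTheory
open scoped ENNReal

private lemma telescope7 {f g : ℕ → ℝ} (hg : ∀ n, g n = f n - f (n+1)) (h0 : ∀ n, 0 ≤ g n)
    (hlim : Filter.Tendsto f Filter.atTop (nhds 0)) :
    HasSum g (f 0) := by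
  rw [hasSum_iff_tendsto_nat_of_nonneg h0]
  have : (fun n : ℕ => ∑ i ∈ Finset.range n, g i) = fun n => f 0 - f n := by
    funext n
    rw [Finset.sum_congr rfl (fun i _ => hg i)]
    exact Finset.sum_range_sub' f n
  rw [this]
  simpa using tendsto_const_nhds.sub hlim

private lemma tendsto7 (K : ℝ) (D : ℕ → ℝ) (hD : Filter.Tendsto D Filter.atTop Filter.atTop) :
    Filter.Tendsto (fun n => K / D n) Filter.atTop (nhds 0) :=
  Filter.Tendsto.div_atTop tendsto_const_nhds hD

set_option maxHeartbeats 2000000 in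
/-- If `Ẑ_1 = ∑_{n ≥ 1} Y_n Y_{n+1}` denotes the count of 1-strings in `Bern(a,b)`
(`a > 0`, `b > 0`, i.e. the independent Bernoulli sequence with
`P(Y_n = 1) = a/(a+b+n-1)`), then `E[Ẑ_1] = a²/(a+b)` and
`E[Ẑ_1²] = a³(a+1)/[(a+b)(a+b+1)] + a²/(a+b)`. -/
theorem stmt7 {Ω : Type*} [MeasurableSpace Ω] (μ : Measure Ω) [IsProbabilityMeasure μ]
    (a b : ℝ) (ha : 0 < a) (hb : 0 < b)
    (Y : ℕ → Ω → ℕ) (hmeas : ∀ n, Measurable (Y n)) (hval : ∀ n ω, Y n ω ≤ 1)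
    (hindep : iIndepFun Y μ)
    (hp : ∀ n : ℕ, 1 ≤ n → μ {ω | Y n ω = 1} = ENNReal.ofReal (a / (a + b + n - 1))) :
    (∫⁻ ω, (∑' n : ℕ, ((Y (n + 1) ω * Y (n + 2) ω : ℕ) : ℝ≥0∞)) ∂μ
        = ENNReal.ofReal (a ^ 2 / (a + b)))
    ∧ (∫⁻ ω, (∑' n : ℕ, ((Y (n + 1) ω * Y (n + 2) ω : ℕ) : ℝ≥0∞)) ^ 2 ∂μ
        = ENNReal.ofReal (a ^ 3 * (a + 1) / ((a + b) * (a + b + 1)) + a ^ 2 / (a + b))) := by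
  classical
  have hc0 : (0:ℝ) < a + b := by linarith
  set c : ℝ := a + b with hcdef
  set X : ℕ → Ω → ℝ≥0∞ := fun n ω => ((Y (n + 1) ω * Y (n + 2) ω : ℕ) : ℝ≥0∞) with hXdef
  set q : ℕ → ℝ := fun n => a / (c + n) * (a / (c + n + 1)) with hqdef
  set r : ℕ → ℝ := fun n => a / (c + n) * (a / (c + n + 1)) * (a / (c + n + 2)) with hrdef
  -- positivity facts
  have hn0 : ∀ n : ℕ, (0:ℝ) ≤ n := fun n => Nat.cast_nonneg n
  have hcn : ∀ n : ℕ, (0:ℝ) < c + n := by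
    intro n; have := hn0 n; rw [hcdef]; linarith
  have hcn1 : ∀ n : ℕ, (0:ℝ) < c + n + 1 := fun n => by have := hcn n; linarith
  have hcn2 : ∀ n : ℕ, (0:ℝ) < c + n + 2 := fun n => by have := hcn n; linarith
  have hA1 : ∀ n : ℕ, a / (c + n) ≤ 1 := by
    intro n
    rw [div_le_one (hcn n)]
    have := hn0 n; rw [hcdef]; linarith
  have hA2 : ∀ n : ℕ, a / (c + n + 1) ≤ 1 := by
    intro n
    rw [div_le_one (hcn1 n)]
    have := hn0 n; rw [hcdef]; linarith
  have hqnn : ∀ n, 0 ≤ q n := by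
    intro n
    simp only [hqdef]
    exact mul_nonneg (div_nonneg ha.le (hcn n).le) (div_nonneg ha.le (hcn1 n).le)
  have hrnn : ∀ n, 0 ≤ r n := by
    intro n
    simp only [hrdef]
    exact mul_nonneg (mul_nonneg (div_nonneg ha.le (hcn n).le)
      (div_nonneg ha.le (hcn1 n).le)) (div_nonneg ha.le (hcn2 n).le)
  have hq1 : ∀ n : ℕ, q n ≤ 1 := by
    intro n
    have h1 := hA1 n
    have h2 := hA2 n
    have p1 : 0 ≤ a / (c + n) := div_nonneg ha.le (hcn n).le
    have p2 : 0 ≤ a / (c + n + 1) := div_nonneg ha.le (hcn1 n).le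
    simp only [hqdef]
    nlinarith
  have hrq : ∀ n : ℕ, q n * q (n+1) ≤ r n := by
    intro n
    have he : q n * q (n+1) = r n * (a / (c + n + 1)) := by
      simp only [hqdef, hrdef]; push_cast; ring
    rw [he]
    exact mul_le_of_le_one_right (hrnn n) (hA2 n)
  -- telescoping sums
  have hq_sum : HasSum q (a^2 / c) := by
    have heq : ∀ n : ℕ, q n = a^2 / (c + n) - a^2 / (c + ((n+1 : ℕ) : ℝ)) := by
      intro n
      simp only [hqdef]
      push_cast
      have h1 := (hcn n).ne'
      have h2 := (hcn1 n).ne'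
      field_simp
      ring
    have key := telescope7 (f := fun k : ℕ => a^2 / (c + k)) heq hqnn
      (tendsto7 _ _ (Filter.tendsto_atTop_add_const_left _ c tendsto_natCast_atTop_atTop))
    simpa using key
  have hatop : Filter.Tendsto (fun n : ℕ => c + (n:ℝ)) Filter.atTop Filter.atTop :=
    Filter.tendsto_atTop_add_const_left _ c tendsto_natCast_atTop_atTop
  have hr_sum : HasSum r (a^3/2 / (c*(c+1))) := by
    have heq : ∀ n : ℕ, r n = a^3/2 / ((c + n)*(c + n + 1))
        - a^3/2 / ((c + ((n+1 : ℕ) : ℝ))*(c + ((n+1 : ℕ) : ℝ) + 1)) := by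
      intro n
      simp only [hrdef]
      push_cast
      have h1 := (hcn n).ne'
      have h2 := (hcn1 n).ne'
      have h3 := (hcn2 n).ne'
      field_simp
      ring
    have hD : Filter.Tendsto (fun n : ℕ => (c + (n:ℝ))*(c + (n:ℝ) + 1))
        Filter.atTop Filter.atTop :=
      Filter.Tendsto.atTop_mul_atTop₀ hatop (Filter.tendsto_atTop_add_const_right _ 1 hatop)
    have key := telescope7 (f := fun k : ℕ => a^3/2 / ((c + k)*(c + k + 1))) heq hrnn
      (tendsto7 _ _ hD)
    simpa using key
  have hmixnn : ∀ n : ℕ, 0 ≤ q n * q n + 2 * (q n * q (n+1)) := by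
    intro n
    have := hqnn n; have := hqnn (n+1)
    nlinarith
  have hmix_sum : HasSum (fun n => q n * q n + 2 * (q n * q (n+1))) (a^4 / (c^2*(c+1))) := by
    have heq : ∀ n : ℕ, q n * q n + 2 * (q n * q (n+1)) = a^4 / ((c + n)^2*(c + n + 1))
        - a^4 / ((c + ((n+1 : ℕ) : ℝ))^2*(c + ((n+1 : ℕ) : ℝ) + 1)) := by
      intro n
      simp only [hqdef]
      push_cast
      have h1 := (hcn n).ne'
      have h2 := (hcn1 n).ne'
      have h3 := (hcn2 n).ne'
      field_simp
      ring
    have hsq : Filter.Tendsto (fun n : ℕ => (c + (n:ℝ))^2) Filter.atTop Filter.atTop := by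
      have := Filter.Tendsto.atTop_mul_atTop₀ hatop hatop
      simpa [pow_two] using this
    have hD : Filter.Tendsto (fun n : ℕ => (c + (n:ℝ))^2*(c + (n:ℝ) + 1))
        Filter.atTop Filter.atTop :=
      Filter.Tendsto.atTop_mul_atTop₀ hsq (Filter.tendsto_atTop_add_const_right _ 1 hatop)
    have key := telescope7 (f := fun k : ℕ => a^4 / ((c + k)^2*(c + k + 1))) heq hmixnn
      (tendsto7 _ _ hD)
    simpa using key
  -- probabilities
  have hP1 : ∀ k : ℕ, μ {ω | Y (k+1) ω = 1} = ENNReal.ofReal (a / (c + k)) := by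
    intro k
    rw [hp (k+1) (by omega)]
    congr 1
    push_cast
    ring
  have hP2 : ∀ k : ℕ, μ {ω | Y (k+2) ω = 1} = ENNReal.ofReal (a / (c + k + 1)) := by
    intro k
    have h := hP1 (k+1)
    rw [show k+1+1 = k+2 by omega] at h
    rw [h]
    congr 1
    push_cast
    ring
  have hP3 : ∀ k : ℕ, μ {ω | Y (k+3) ω = 1} = ENNReal.ofReal (a / (c + k + 2)) := by
    intro k
    have h := hP1 (k+2)
    rw [show k+2+1 = k+3 by omega] at h
    rw [h]
    congr 1
    push_cast
    ring
  -- measurability and independence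
  have hXmeas : ∀ n, Measurable (X n) := by
    intro n
    exact measurable_from_top.comp ((hmeas (n+1)).mul (hmeas (n+2)))
  have hsetm : ∀ s : Finset ℕ, MeasurableSet (⋂ i ∈ s, {ω | Y i ω = 1}) := by
    intro s
    exact MeasurableSet.biInter s.countable_toSet
      (fun i _ => hmeas i (measurableSet_singleton 1))
  have hInd : ∀ s : Finset ℕ, μ (⋂ i ∈ s, {ω | Y i ω = 1}) = ∏ i ∈ s, μ {ω | Y i ω = 1} :=
    fun s => hindep.meas_biInter (fun i _ => ⟨{1}, measurableSet_singleton 1, rfl⟩)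
  -- key integral computation
  have hE : ∀ m n : ℕ, ∫⁻ ω, X m ω * X n ω ∂μ
      = ∏ i ∈ ({m+1, m+2, n+1, n+2} : Finset ℕ), μ {ω | Y i ω = 1} := by
    intro m n
    have hpt : ∀ ω, X m ω * X n ω
        = (⋂ i ∈ ({m+1, m+2, n+1, n+2} : Finset ℕ), {ω' | Y i ω' = 1}).indicator 1 ω := by
      intro ω
      by_cases h : ω ∈ ⋂ i ∈ ({m+1, m+2, n+1, n+2} : Finset ℕ), {ω' | Y i ω' = 1}
      · rw [Set.indicator_of_mem h]
        simp only [Set.mem_iInter, Finset.mem_insert, Finset.mem_singleton,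
          Set.mem_setOf_eq] at h
        have h1 : Y (m+1) ω = 1 := h _ (by tauto)
        have h2 : Y (m+2) ω = 1 := h _ (by tauto)
        have h3 : Y (n+1) ω = 1 := h _ (by tauto)
        have h4 : Y (n+2) ω = 1 := h _ (by tauto)
        simp [hXdef, h1, h2, h3, h4]
      · rw [Set.indicator_of_notMem h]
        simp only [Set.mem_iInter, Finset.mem_insert, Finset.mem_singleton,
          Set.mem_setOf_eq] at h
        push_neg at h
        obtain ⟨i, hi, hYi⟩ := h
        have hY0 : Y i ω = 0 := by have := hval i ω; omega
        rcases hi with h' | h' | h' | h' <;> subst h' <;> simp [hXdef, hY0]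
    rw [lintegral_congr hpt, lintegral_indicator_one (hsetm _), hInd _]
  -- evaluation by cases
  set EV : ℕ → ℕ → ℝ := fun m n =>
    if m = n then q n else if n = m + 1 then r m else if m = n + 1 then r n else q m * q n
    with hEVdef
  have hEV : ∀ m n : ℕ, ∫⁻ ω, X m ω * X n ω ∂μ = ENNReal.ofReal (EV m n) := by
    intro m n
    rw [hE m n]
    by_cases h1 : m = n
    · obtain rfl := h1
      have hs : ({m+1, m+2, m+1, m+2} : Finset ℕ) = {m+1, m+2} := by
        ext x; simp
      rw [hs, Finset.prod_pair (by omega), hP1 m, hP2 m,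
        ← ENNReal.ofReal_mul (div_nonneg ha.le (hcn m).le),
        show EV m m = q m from by simp [hEVdef]]
    · by_cases h2 : n = m + 1
      · subst h2
        have hs : ({m+1, m+2, m+1+1, m+1+2} : Finset ℕ) = {m+1, m+2, m+3} := by
          ext x; simp; try omega
        rw [hs, Finset.prod_insert (by simp), Finset.prod_insert (by simp),
          Finset.prod_singleton, hP1 m, hP2 m, hP3 m,
          ← ENNReal.ofReal_mul (div_nonneg ha.le (hcn1 m).le),
          ← ENNReal.ofReal_mul (div_nonneg ha.le (hcn m).le),
          show EV m (m+1) = r m from by simp [hEVdef, h1]]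
        simp only [hrdef]
        congr 1
        ring
      · by_cases h3 : m = n + 1
        · subst h3
          have hs : ({n+1+1, n+1+2, n+1, n+2} : Finset ℕ) = {n+1, n+2, n+3} := by
            ext x; simp; try omega
          rw [hs, Finset.prod_insert (by simp), Finset.prod_insert (by simp),
            Finset.prod_singleton, hP1 n, hP2 n, hP3 n,
            ← ENNReal.ofReal_mul (div_nonneg ha.le (hcn1 n).le),
            ← ENNReal.ofReal_mul (div_nonneg ha.le (hcn n).le),
            show EV (n+1) n = r n from by simp [hEVdef, h1, h2]]
          simp only [hrdef]
          congr 1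
          ring
        · have hs1 : (m+1 : ℕ) ∉ ({m+2, n+1, n+2} : Finset ℕ) := by simp; omega
          have hs2 : (m+2 : ℕ) ∉ ({n+1, n+2} : Finset ℕ) := by simp; omega
          rw [Finset.prod_insert hs1, Finset.prod_insert hs2, Finset.prod_pair (by omega),
            hP1 m, hP2 m, hP1 n, hP2 n,
            ← ENNReal.ofReal_mul (div_nonneg ha.le (hcn n).le),
            ← ENNReal.ofReal_mul (div_nonneg ha.le (hcn1 m).le),
            ← ENNReal.ofReal_mul (div_nonneg ha.le (hcn m).le),
            show EV m n = q m * q n from by simp [hEVdef, h1, h2, h3]]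
          simp only [hqdef]
          congr 1
          ring
  -- X n is 0/1 valued
  have hXsq : ∀ n ω, X n ω = X n ω * X n ω := by
    intro n ω
    simp only [hXdef]
    have h1 := hval (n+1) ω
    have h2 := hval (n+2) ω
    rcases Nat.le_one_iff_eq_zero_or_eq_one.mp h1 with h | h <;>
      rcases Nat.le_one_iff_eq_zero_or_eq_one.mp h2 with h' | h' <;> simp [h, h']
  have hEq : ∀ n, ∫⁻ ω, X n ω ∂μ = ENNReal.ofReal (q n) := by
    intro n
    rw [lintegral_congr (hXsq n), hEV n n,
      show EV n n = q n from by simp [hEVdef]]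
  have hSq : ∑' n : ℕ, ENNReal.ofReal (q n) = ENNReal.ofReal (a^2/c) := by
    rw [← ENNReal.ofReal_tsum_of_nonneg hqnn hq_sum.summable, hq_sum.tsum_eq]
  -- FIRST MOMENT
  have first : ∫⁻ ω, ∑' n : ℕ, X n ω ∂μ = ENNReal.ofReal (a^2 / c) := by
    rw [lintegral_tsum (fun n => (hXmeas n).aemeasurable), tsum_congr hEq, hSq]
  -- SECOND MOMENT
  have hsqpt : ∀ ω, (∑' n : ℕ, X n ω)^2 = ∑' z : ℕ × ℕ, X z.1 ω * X z.2 ω := by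
    intro ω
    rw [pow_two, ← ENNReal.tsum_mul_right, ENNReal.tsum_prod']
    exact tsum_congr fun m => by rw [← ENNReal.tsum_mul_left]
  have second0 : ∫⁻ ω, (∑' n : ℕ, X n ω)^2 ∂μ = ∑' z : ℕ × ℕ, ENNReal.ofReal (EV z.1 z.2) := by
    rw [lintegral_congr hsqpt,
      lintegral_tsum (f := fun (z : ℕ × ℕ) ω => X z.1 ω * X z.2 ω)
        (fun z => ((hXmeas z.1).mul (hXmeas z.2)).aemeasurable)]
    exact tsum_congr fun z => hEV z.1 z.2
  -- corrections
  set B1 : ℕ × ℕ → ℝ≥0∞ := fun z =>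
    if z.1 = z.2 then ENNReal.ofReal (q z.1 - q z.1 * q z.2) else 0 with hB1def
  set B2 : ℕ × ℕ → ℝ≥0∞ := fun z =>
    if z.2 = z.1 + 1 then ENNReal.ofReal (r z.1 - q z.1 * q z.2) else 0 with hB2def
  set B3 : ℕ × ℕ → ℝ≥0∞ := fun z =>
    if z.1 = z.2 + 1 then ENNReal.ofReal (r z.2 - q z.1 * q z.2) else 0 with hB3def
  have hsplit : ∀ z : ℕ × ℕ, ENNReal.ofReal (EV z.1 z.2)
      = ENNReal.ofReal (q z.1) * ENNReal.ofReal (q z.2) + B1 z + B2 z + B3 z := by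
    rintro ⟨m, n⟩
    dsimp only
    by_cases h1 : m = n
    · obtain rfl := h1
      rw [show EV m m = q m from by simp [hEVdef],
        show B1 (m, m) = ENNReal.ofReal (q m - q m * q m) from by simp [hB1def],
        show B2 (m, m) = 0 from by simp [hB2def],
        show B3 (m, m) = 0 from by simp [hB3def],
        add_zero, add_zero, ← ENNReal.ofReal_mul (hqnn m),
        ← ENNReal.ofReal_add (mul_nonneg (hqnn m) (hqnn m)) (by nlinarith [hqnn m, hq1 m])]
      congr 1
      ring
    · by_cases h2 : n = m + 1
      · subst h2
        rw [show EV m (m+1) = r m from by simp [hEVdef, h1],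
          show B1 (m, m+1) = 0 from by simp [hB1def, h1],
          show B2 (m, m+1) = ENNReal.ofReal (r m - q m * q (m+1)) from by simp [hB2def],
          show B3 (m, m+1) = 0 from by
            have hx : ¬ m = m + 1 + 1 := by omega
            simp [hB3def, hx],
          add_zero, add_zero, ← ENNReal.ofReal_mul (hqnn m),
          ← ENNReal.ofReal_add (mul_nonneg (hqnn m) (hqnn (m+1)))
            (sub_nonneg.mpr (hrq m))]
        congr 1
        ring
      · by_cases h3 : m = n + 1
        · subst h3
          rw [show EV (n+1) n = r n from by simp [hEVdef, h1, h2],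
            show B1 (n+1, n) = 0 from by simp [hB1def, h1],
            show B2 (n+1, n) = 0 from by simp [hB2def, h2],
            show B3 (n+1, n) = ENNReal.ofReal (r n - q (n+1) * q n) from by simp [hB3def],
            add_zero, add_zero, ← ENNReal.ofReal_mul (hqnn (n+1)),
            ← ENNReal.ofReal_add (mul_nonneg (hqnn (n+1)) (hqnn n))
              (by rw [mul_comm]; exact sub_nonneg.mpr (hrq n))]
          congr 1
          ring
        · rw [show EV m n = q m * q n from by simp [hEVdef, h1, h2, h3],
            show B1 (m, n) = 0 from by simp [hB1def, h1],
            show B2 (m, n) = 0 from by simp [hB2def, h2],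
            show B3 (m, n) = 0 from by simp [hB3def, h3],
            add_zero, add_zero, add_zero, ← ENNReal.ofReal_mul (hqnn m)]
  -- main term
  have hAterm : ∑' z : ℕ × ℕ, ENNReal.ofReal (q z.1) * ENNReal.ofReal (q z.2)
      = ENNReal.ofReal (a^2/c) * ENNReal.ofReal (a^2/c) := by
    calc ∑' z : ℕ × ℕ, ENNReal.ofReal (q z.1) * ENNReal.ofReal (q z.2)
        = ∑' (m : ℕ) (n : ℕ), ENNReal.ofReal (q m) * ENNReal.ofReal (q n) :=
          ENNReal.tsum_prod'
      _ = ∑' (m : ℕ), ENNReal.ofReal (q m) * ENNReal.ofReal (a^2/c) := by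
          refine tsum_congr fun m => ?_
          rw [ENNReal.tsum_mul_left, hSq]
      _ = (∑' (m : ℕ), ENNReal.ofReal (q m)) * ENNReal.ofReal (a^2/c) :=
          ENNReal.tsum_mul_right
      _ = ENNReal.ofReal (a^2/c) * ENNReal.ofReal (a^2/c) := by rw [hSq]
  -- correction sums
  have hB1sum : ∑' z : ℕ × ℕ, B1 z = ∑' n : ℕ, ENNReal.ofReal (q n - q n * q n) := by
    have hinj : Function.Injective (fun n : ℕ => ((n, n) : ℕ × ℕ)) := by
      intro x y h; simpa using congrArg Prod.fst h
    have hsupp : Function.support B1 ⊆ Set.range (fun n : ℕ => ((n, n) : ℕ × ℕ)) := by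
      rintro ⟨m, n⟩ hz
      rw [Function.mem_support] at hz
      by_cases h : m = n
      · subst h; exact ⟨m, rfl⟩
      · exact (hz (by simp [hB1def, h])).elim
    rw [← Function.Injective.tsum_eq hinj hsupp]
    refine tsum_congr fun n => ?_
    show B1 (n, n) = _
    simp [hB1def]
  have hB2sum : ∑' z : ℕ × ℕ, B2 z = ∑' n : ℕ, ENNReal.ofReal (r n - q n * q (n+1)) := by
    have hinj : Function.Injective (fun n : ℕ => ((n, n+1) : ℕ × ℕ)) := by
      intro x y h; simpa using congrArg Prod.fst h
    have hsupp : Function.support B2 ⊆ Set.range (fun n : ℕ => ((n, n+1) : ℕ × ℕ)) := by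
      rintro ⟨m, n⟩ hz
      rw [Function.mem_support] at hz
      by_cases h : n = m + 1
      · subst h; exact ⟨m, rfl⟩
      · exact (hz (by simp [hB2def, h])).elim
    rw [← Function.Injective.tsum_eq hinj hsupp]
    refine tsum_congr fun n => ?_
    show B2 (n, n+1) = _
    simp [hB2def]
  have hB3sum : ∑' z : ℕ × ℕ, B3 z = ∑' n : ℕ, ENNReal.ofReal (r n - q n * q (n+1)) := by
    have hinj : Function.Injective (fun n : ℕ => ((n+1, n) : ℕ × ℕ)) := by
      intro x y h; simpa using congrArg Prod.snd h
    have hsupp : Function.support B3 ⊆ Set.range (fun n : ℕ => ((n+1, n) : ℕ × ℕ)) := by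
      rintro ⟨m, n⟩ hz
      rw [Function.mem_support] at hz
      by_cases h : m = n + 1
      · subst h; exact ⟨n, rfl⟩
      · exact (hz (by simp [hB3def, h])).elim
    rw [← Function.Injective.tsum_eq hinj hsupp]
    refine tsum_congr fun n => ?_
    show B3 (n+1, n) = _
    simp [hB3def, mul_comm]
  -- the total correction
  have hWnn : ∀ n : ℕ, 0 ≤ (q n - q n * q n) + ((r n - q n * q (n+1)) + (r n - q n * q (n+1))) := by
    intro n
    have h1 : 0 ≤ q n - q n * q n := by nlinarith [hqnn n, hq1 n]
    have h2 : 0 ≤ r n - q n * q (n+1) := sub_nonneg.mpr (hrq n)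
    linarith
  have hW : HasSum (fun n => (q n - q n * q n) + ((r n - q n * q (n+1)) + (r n - q n * q (n+1))))
      (a^2/c + a^3/(c*(c+1)) - a^4/(c^2*(c+1))) := by
    have h1 : HasSum (fun n => (q n + 2 * r n) - (q n * q n + 2 * (q n * q (n+1))))
        ((a^2/c + 2 * (a^3/2 / (c*(c+1)))) - a^4 / (c^2*(c+1))) :=
      (hq_sum.add (hr_sum.mul_left 2)).sub hmix_sum
    have hfe : (fun n => (q n + 2 * r n) - (q n * q n + 2 * (q n * q (n+1))))
        = fun n => (q n - q n * q n) + ((r n - q n * q (n+1)) + (r n - q n * q (n+1))) := by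
      funext n; ring
    have hve : (a^2/c + 2 * (a^3/2 / (c*(c+1)))) - a^4 / (c^2*(c+1))
        = a^2/c + a^3/(c*(c+1)) - a^4/(c^2*(c+1)) := by
      ring
    rw [hfe, hve] at h1
    exact h1
  have hBtotal : (∑' z : ℕ × ℕ, B1 z) + ((∑' z : ℕ × ℕ, B2 z) + (∑' z : ℕ × ℕ, B3 z))
      = ENNReal.ofReal (a^2/c + a^3/(c*(c+1)) - a^4/(c^2*(c+1))) := by
    have hadd : ∑' n : ℕ, (ENNReal.ofReal (q n - q n * q n)
        + (ENNReal.ofReal (r n - q n * q (n+1)) + ENNReal.ofReal (r n - q n * q (n+1))))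
        = (∑' n : ℕ, ENNReal.ofReal (q n - q n * q n))
          + ((∑' n : ℕ, ENNReal.ofReal (r n - q n * q (n+1)))
            + (∑' n : ℕ, ENNReal.ofReal (r n - q n * q (n+1)))) := by
      rw [ENNReal.tsum_add, ENNReal.tsum_add]
    rw [hB1sum, hB2sum, hB3sum, ← hadd]
    have hpt : ∀ n : ℕ, ENNReal.ofReal (q n - q n * q n)
        + (ENNReal.ofReal (r n - q n * q (n+1)) + ENNReal.ofReal (r n - q n * q (n+1)))
        = ENNReal.ofReal ((q n - q n * q n) + ((r n - q n * q (n+1)) + (r n - q n * q (n+1)))) := by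
      intro n
      have h1 : 0 ≤ q n - q n * q n := by nlinarith [hqnn n, hq1 n]
      have h2 : 0 ≤ r n - q n * q (n+1) := sub_nonneg.mpr (hrq n)
      rw [← ENNReal.ofReal_add h2 h2, ← ENNReal.ofReal_add h1 (add_nonneg h2 h2)]
    rw [tsum_congr hpt, ← ENNReal.ofReal_tsum_of_nonneg hWnn hW.summable, hW.tsum_eq]
  have hWnn' : (0:ℝ) ≤ a^2/c + a^3/(c*(c+1)) - a^4/(c^2*(c+1)) :=
    hasSum_le hWnn hasSum_zero hW
  have second : ∫⁻ ω, (∑' n : ℕ, X n ω)^2 ∂μ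
      = ENNReal.ofReal (a ^ 3 * (a + 1) / (c * (c + 1)) + a ^ 2 / c) := by
    rw [second0, tsum_congr hsplit]
    simp only [ENNReal.tsum_add]
    rw [hAterm, add_assoc, add_assoc, hBtotal,
      ← ENNReal.ofReal_mul (div_nonneg (pow_nonneg ha.le 2) hc0.le),
      ← ENNReal.ofReal_add (mul_nonneg (div_nonneg (pow_nonneg ha.le 2) hc0.le)
        (div_nonneg (pow_nonneg ha.le 2) hc0.le)) hWnn']
    congr 1
    have h1 : c ≠ 0 := hc0.ne'
    have h2 : c + 1 ≠ 0 := by nlinarith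
    field_simp
    ring
  constructor
  · simpa only [hXdef] using first
  · simpa only [hXdef] using second
end

section
/- Let Z_1 be the count of 1-strings in Bern_1(a,b) with a>0, b≥0. Then E[Z_1] = a(a+1)/(a+b), E[Z_1²] = a(a+1)/(a+b) + a²(a+1)(a+2)/[(a+b)(a+b+1)], and consequently Var(Z_1) − E[Z_1] = a²(a+1)(b−1)/[(a+b)²(a+b+1)]. -/
open Finset MeasureTheory ProbabilityTheory
open scoped ENNReal
open Filter

lemma telescope_hasSum (g : ℕ → ℝ) (hmono : ∀ k, g (k + 1) ≤ g k)
    (hlim : Tendsto g atTop (nhds 0)) :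
    HasSum (fun k => g k - g (k + 1)) (g 0) := by
  have hnn : ∀ k, 0 ≤ g k - g (k + 1) := fun k => sub_nonneg.2 (hmono k)
  rw [hasSum_iff_tendsto_nat_of_nonneg hnn]
  have heq : (fun n => ∑ i ∈ Finset.range n, (g i - g (i + 1))) = fun n => g 0 - g n := by
    funext n; exact Finset.sum_range_sub' g n
  rw [heq]
  simpa using tendsto_const_nhds.sub hlim

lemma tendsto_inv_add (x : ℝ) (hx : 0 < x) :
    Tendsto (fun k : ℕ => 1 / (x + k)) atTop (nhds 0) := by
  have h : Tendsto (fun k : ℕ => x + (k : ℝ)) atTop atTop :=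
    tendsto_atTop_add_const_left _ x tendsto_natCast_atTop_atTop
  have h' : Tendsto (fun k : ℕ => (x + (k:ℝ))⁻¹) atTop (nhds 0) := h.inv_tendsto_atTop
  simpa [one_div] using h'

lemma hasSum_two (x : ℝ) (hx : 0 < x) :
    HasSum (fun k : ℕ => 1 / ((x + k) * (x + k + 1))) (1 / x) := by
  have key : ∀ k : ℕ, 1 / ((x + k) * (x + k + 1))
      = 1 / (x + k) - 1 / (x + (k + 1 : ℕ)) := by
    intro k
    have h1 : (0:ℝ) < x + k := by positivity
    have h2 : (0:ℝ) < x + k + 1 := by positivity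
    push_cast
    rw [div_sub_div _ _ h1.ne' (show (x + ((k:ℝ)+1)) ≠ 0 by positivity),
      div_eq_div_iff (by positivity) (by positivity)]
    ring
  have H := telescope_hasSum (fun k : ℕ => 1 / (x + k))
    (fun k => by
      have h1 : (0:ℝ) < x + k := by positivity
      have : (x + k : ℝ) ≤ x + (k + 1 : ℕ) := by push_cast; linarith
      exact one_div_le_one_div_of_le h1 this)
    (tendsto_inv_add x hx)
  rw [show (fun k : ℕ => 1 / (x + k) - 1 / (x + (k+1:ℕ))) = (fun k : ℕ => 1 / ((x + k) * (x + k + 1))) from funext fun k => (key k).symm] at H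
  simpa using H

lemma hasSum_three (x : ℝ) (hx : 0 < x) :
    HasSum (fun k : ℕ => 1 / ((x + k) * (x + k + 1) * (x + k + 2)))
      (1 / (2 * x * (x + 1))) := by
  have key : ∀ k : ℕ, 1 / ((x + k) * (x + k + 1) * (x + k + 2))
      = 1 / (2 * (x + k) * (x + k + 1))
        - 1 / (2 * (x + (k + 1 : ℕ)) * (x + (k + 1 : ℕ) + 1)) := by
    intro k
    have h1 : (0:ℝ) < x + k := by positivity
    have h2 : (0:ℝ) < x + k + 1 := by positivity
    have h3 : (0:ℝ) < x + k + 2 := by positivity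
    have h4 : (0:ℝ) < 2 * (x + k) * (x + k + 1) := by positivity
    have h5 : (0:ℝ) < 2 * (x + (k+1:ℕ)) * (x + (k+1:ℕ) + 1) := by positivity
    rw [div_sub_div _ _ h4.ne' h5.ne', div_eq_div_iff (by positivity) (by positivity)]
    push_cast
    ring
  have hlim : Tendsto (fun k : ℕ => 1 / (2 * (x + k) * (x + k + 1))) atTop (nhds 0) := by
    have h : Tendsto (fun k : ℕ => 2 * (x + (k:ℝ)) * (x + k + 1)) atTop atTop := by
      have h1 : Tendsto (fun k : ℕ => x + (k : ℝ)) atTop atTop :=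
        tendsto_atTop_add_const_left _ x tendsto_natCast_atTop_atTop
      have h2 : Tendsto (fun k : ℕ => x + (k : ℝ) + 1) atTop atTop :=
        tendsto_atTop_add_const_right _ 1 h1
      exact (h1.const_mul_atTop two_pos).atTop_mul_atTop₀ h2
    have h' : Tendsto (fun k : ℕ => (2 * (x + (k:ℝ)) * (x + k + 1))⁻¹) atTop (nhds 0) := h.inv_tendsto_atTop
    simpa only [one_div, Pi.inv_apply] using h'
  have H := telescope_hasSum (fun k : ℕ => 1 / (2 * (x + k) * (x + k + 1)))
    (fun k => by
      have h1 : (0:ℝ) < 2 * (x + k) * (x + k + 1) := by positivity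
      have hle : 2 * (x + (k:ℝ)) * (x + k + 1) ≤ 2 * (x + (k + 1 : ℕ)) * (x + (k + 1 : ℕ) + 1) := by
        push_cast
        nlinarith [hx, (Nat.cast_nonneg k : (0:ℝ) ≤ k)]
      exact one_div_le_one_div_of_le h1 hle)
    hlim
  rw [show (fun k : ℕ => 1 / (2 * (x + k) * (x + k + 1)) - 1 / (2 * (x + (k+1:ℕ)) * (x + (k+1:ℕ) + 1))) = (fun k : ℕ => 1 / ((x + k) * (x + k + 1) * (x + k + 2))) from funext fun k => (key k).symm] at H
  have h0 : (1:ℝ) / (2 * (x + ((0:ℕ):ℝ)) * (x + ((0:ℕ):ℝ) + 1)) = 1 / (2 * x * (x + 1)) := by norm_num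
  simpa [h0] using H

lemma tsum_ofReal_hasSum {t : ℕ → ℝ} {s : ℝ} (h : HasSum t s) (hnn : ∀ n, 0 ≤ t n) :
    ∑' n, ENNReal.ofReal (t n) = ENNReal.ofReal s := by
  rw [← ENNReal.ofReal_tsum_of_nonneg hnn h.summable, h.tsum_eq]


set_option maxHeartbeats 1600000 in
/-- Let `Z_1 = ∑_{n ≥ 1} Y_n Y_{n+1}` be the count of 1-strings in `Bern₁(a,b)` with
`a > 0`, `b ≥ 0` (the independent Bernoulli sequence with `P(Y_1 = 1) = 1` and
`P(Y_n = 1) = a/(a+b+n-2)` for `n ≥ 2`).  Then `E[Z_1] = a(a+1)/(a+b)`,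
`E[Z_1²] = a(a+1)/(a+b) + a²(a+1)(a+2)/[(a+b)(a+b+1)]`, and consequently
`Var(Z_1) - E[Z_1] = a²(a+1)(b-1)/[(a+b)²(a+b+1)]`. -/
theorem stmt9 {Ω : Type*} [MeasurableSpace Ω] (μ : Measure Ω) [IsProbabilityMeasure μ]
    (a b : ℝ) (ha : 0 < a) (hb : 0 ≤ b)
    (Y : ℕ → Ω → ℕ) (hmeas : ∀ n, Measurable (Y n)) (hval : ∀ n ω, Y n ω ≤ 1)
    (hindep : iIndepFun Y μ)
    (hp1 : μ {ω | Y 1 ω = 1} = 1)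
    (hp : ∀ n : ℕ, 2 ≤ n → μ {ω | Y n ω = 1} = ENNReal.ofReal (a / (a + b + n - 2))) :
    (∫⁻ ω, (∑' n : ℕ, ((Y (n + 1) ω * Y (n + 2) ω : ℕ) : ℝ≥0∞)) ∂μ
        = ENNReal.ofReal (a * (a + 1) / (a + b)))
    ∧ (∫⁻ ω, (∑' n : ℕ, ((Y (n + 1) ω * Y (n + 2) ω : ℕ) : ℝ≥0∞)) ^ 2 ∂μ
        = ENNReal.ofReal (a * (a + 1) / (a + b)
            + a ^ 2 * (a + 1) * (a + 2) / ((a + b) * (a + b + 1))))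
    ∧ ((a * (a + 1) / (a + b) + a ^ 2 * (a + 1) * (a + 2) / ((a + b) * (a + b + 1)))
          - (a * (a + 1) / (a + b)) ^ 2 - a * (a + 1) / (a + b)
        = a ^ 2 * (a + 1) * (b - 1) / ((a + b) ^ 2 * (a + b + 1))) := by
  classical
  have hc : (0:ℝ) < a + b := by positivity
  have hc1 : (0:ℝ) < a + b + 1 := by positivity
  set c : ℝ := a + b with hcdef
  set X : ℕ → Ω → ℝ≥0∞ := fun i ω => ((Y i ω : ℕ) : ℝ≥0∞) with hXdef
  set q : ℕ → ℝ≥0∞ := fun i => μ {ω | Y i ω = 1} with hqdef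
  have hY01 : ∀ i ω, Y i ω = 0 ∨ Y i ω = 1 :=
    fun i ω => Nat.le_one_iff_eq_zero_or_eq_one.mp (hval i ω)
  have hXm : ∀ i, Measurable (X i) :=
    fun i => (measurable_from_nat (f := fun n : ℕ => (n : ℝ≥0∞))).comp (hmeas i)
  -- integral of a product of indicators
  have prodInt : ∀ s : Finset ℕ, (∫⁻ ω, ∏ i ∈ s, X i ω ∂μ) = ∏ i ∈ s, q i := by
    intro s
    have hprod : ∀ ω, (∏ i ∈ s, X i ω)
        = Set.indicator (⋂ i ∈ s, {ω | Y i ω = 1}) (1 : Ω → ℝ≥0∞) ω := by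
      intro ω
      by_cases h : ∀ i ∈ s, Y i ω = 1
      · have hmem : ω ∈ ⋂ i ∈ s, {ω | Y i ω = 1} := Set.mem_iInter₂.2 fun i hi => h i hi
        rw [Set.indicator_of_mem hmem]
        simpa using Finset.prod_eq_one fun i hi => by simp [hXdef, h i hi]
      · push_neg at h
        obtain ⟨i, hi, hne⟩ := h
        have h0 : Y i ω = 0 := (hY01 i ω).resolve_right hne
        rw [Set.indicator_of_notMem (fun hmem => hne (Set.mem_iInter₂.1 hmem i hi))]
        exact Finset.prod_eq_zero hi (by simp [hXdef, h0])
    have hms : MeasurableSet (⋂ i ∈ s, {ω | Y i ω = 1}) :=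
      Finset.measurableSet_biInter s fun i _ => (hmeas i) (measurableSet_singleton 1)
    calc (∫⁻ ω, ∏ i ∈ s, X i ω ∂μ)
        = ∫⁻ ω, Set.indicator (⋂ i ∈ s, {ω | Y i ω = 1}) (1 : Ω → ℝ≥0∞) ω ∂μ := by
          exact lintegral_congr hprod
      _ = μ (⋂ i ∈ s, {ω | Y i ω = 1}) := lintegral_indicator_one hms
      _ = ∏ i ∈ s, q i := by
          have hset : ∀ i : ℕ, Y i ⁻¹' ({1} : Set ℕ) = {ω | Y i ω = 1} := fun i => rfl
          have := hindep.measure_inter_preimage_eq_mul s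
            (sets := fun _ => ({1} : Set ℕ)) (fun i _ => measurableSet_singleton 1)
          simp only [hset] at this
          rw [this, hqdef]
  have I2 : ∀ i j : ℕ, i < j → (∫⁻ ω, X i ω * X j ω ∂μ) = q i * q j := by
    intro i j hij
    have h := prodInt {i, j}
    simp only [Finset.prod_pair hij.ne] at h
    exact h
  have I3 : ∀ i j k : ℕ, i < j → j < k →
      (∫⁻ ω, X i ω * (X j ω * X k ω) ∂μ) = q i * (q j * q k) := by
    intro i j k hij hjk
    have h1 : i ∉ ({j, k} : Finset ℕ) := by simp [hij.ne, (hij.trans hjk).ne]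
    have h := prodInt {i, j, k}
    simp only [show ({i, j, k} : Finset ℕ) = insert i {j, k} from rfl,
      Finset.prod_insert h1, Finset.prod_pair hjk.ne] at h
    exact h
  have I4 : ∀ i j k l : ℕ, i < j → j < k → k < l →
      (∫⁻ ω, X i ω * (X j ω * (X k ω * X l ω)) ∂μ) = q i * (q j * (q k * q l)) := by
    intro i j k l hij hjk hkl
    have h1 : i ∉ ({j, k, l} : Finset ℕ) := by
      simp [hij.ne, (hij.trans hjk).ne, ((hij.trans hjk).trans hkl).ne]
    have h2 : j ∉ ({k, l} : Finset ℕ) := by simp [hjk.ne, (hjk.trans hkl).ne]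
    have h := prodInt {i, j, k, l}
    simp only [show ({i, j, k, l} : Finset ℕ) = insert i (insert j {k, l}) from rfl,
      Finset.prod_insert h1, Finset.prod_insert h2, Finset.prod_pair hkl.ne] at h
    exact h
  -- values of q
  have hq1 : q 1 = 1 := hp1
  have hq2 : ∀ j : ℕ, q (j + 2) = ENNReal.ofReal (a / (c + j)) := by
    intro j
    have h := hp (j + 2) (by omega)
    show μ {ω | Y (j+2) ω = 1} = _
    rw [h]
    congr 1
    push_cast
    ring
  have hq2' : q 2 = ENNReal.ofReal (a / c) := by
    have := hq2 0; norm_num at this; exact this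
  have hq3' : q 3 = ENNReal.ofReal (a / (c + 1)) := by
    have := hq2 1; norm_num at this; exact this
  have hXsq : ∀ i ω, X i ω * X i ω = X i ω := by
    intro i ω
    rcases hY01 i ω with h | h <;> simp [hXdef, h]
  set F : ℕ → ℕ → ℝ≥0∞ :=
    fun m n => ∫⁻ ω, (X (m+1) ω * X (m+2) ω) * (X (n+1) ω * X (n+2) ω) ∂μ with hFdef
  have hFsymm : ∀ m n, F m n = F n m := by
    intro m n
    rw [hFdef]
    exact lintegral_congr fun ω => mul_comm _ _
  have hFdiag : ∀ m, F m m = q (m+1) * q (m+2) := by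
    intro m
    rw [hFdef]
    simp only []
    rw [lintegral_congr (fun ω => by
      rw [mul_mul_mul_comm, hXsq, hXsq] :
        ∀ ω, (X (m+1) ω * X (m+2) ω) * (X (m+1) ω * X (m+2) ω)
          = X (m+1) ω * X (m+2) ω)]
    exact I2 _ _ (by omega)
  have hFadj : ∀ m, F m (m+1) = q (m+1) * (q (m+2) * q (m+3)) := by
    intro m
    rw [hFdef]
    simp only []
    have hpt : ∀ ω, (X (m+1) ω * X (m+2) ω) * (X (m+1+1) ω * X (m+1+2) ω)
        = X (m+1) ω * (X (m+2) ω * X (m+3) ω) := by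
      intro ω
      have e1 : m+1+1 = m+2 := rfl
      have e2 : m+1+2 = m+3 := rfl
      rw [e1, e2]
      calc (X (m+1) ω * X (m+2) ω) * (X (m+2) ω * X (m+3) ω)
          = X (m+1) ω * ((X (m+2) ω * X (m+2) ω) * X (m+3) ω) := by ring
        _ = X (m+1) ω * (X (m+2) ω * X (m+3) ω) := by rw [hXsq]
    rw [lintegral_congr hpt]
    exact I3 _ _ _ (by omega) (by omega)
  have hFfar : ∀ m k, F m (m+2+k) = q (m+1) * (q (m+2) * (q (m+3+k) * q (m+4+k))) := by
    intro m k
    rw [hFdef]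
    simp only []
    have e1 : m+2+k+1 = m+3+k := by omega
    have e2 : m+2+k+2 = m+4+k := by omega
    rw [e1, e2]
    rw [lintegral_congr (fun ω => by ring :
      ∀ ω, (X (m+1) ω * X (m+2) ω) * (X (m+3+k) ω * X (m+4+k) ω)
        = X (m+1) ω * (X (m+2) ω * (X (m+3+k) ω * X (m+4+k) ω)))]
    exact I4 _ _ _ _ (by omega) (by omega) (by omega)
  -- scalar series
  have hD : (∑' m : ℕ, q (m+1) * q (m+2)) = ENNReal.ofReal (a * (a+1) / c) := by
    rw [tsum_eq_zero_add' ENNReal.summable]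
    have h0 : q (0+1) * q (0+2) = ENNReal.ofReal (a / c) := by
      norm_num [hq1, hq2']
    have hterm : ∀ j : ℕ, q (j+1+1) * q (j+1+2)
        = ENNReal.ofReal (a^2 * (1 / ((c+j) * (c+j+1)))) := by
      intro j
      have e1 : j+1+1 = j+2 := rfl
      have e2 : j+1+2 = (j+1)+2 := rfl
      rw [e1, e2, hq2 j, hq2 (j+1), ← ENNReal.ofReal_mul (by positivity)]
      congr 1
      have d1 : (0:ℝ) < c + j := by positivity
      have d2 : (0:ℝ) < c + j + 1 := by positivity
      push_cast
      rw [show c + ((j:ℝ)+1) = c + j + 1 by ring]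
      field_simp
      try ring
    rw [h0]
    simp_rw [hterm]
    rw [tsum_ofReal_hasSum ((hasSum_two c hc).mul_left (a^2)) (fun n => by positivity)]
    rw [← ENNReal.ofReal_add (by positivity) (by positivity)]
    congr 1
    field_simp
    try ring
  have hA : (∑' m : ℕ, F m (m+1))
      = ENNReal.ofReal (a^2 * (1 / (c * (c+1))) + a^3 * (1 / (2 * c * (c+1)))) := by
    simp_rw [hFadj]
    rw [tsum_eq_zero_add' ENNReal.summable]
    have h0 : q (0+1) * (q (0+2) * q (0+3)) = ENNReal.ofReal (a^2 * (1 / (c * (c+1)))) := by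
      norm_num [hq1, hq2', hq3']
      rw [← ENNReal.ofReal_mul (by positivity)]
      congr 1
      have d1 : (0:ℝ) < c := hc
      have d2 : (0:ℝ) < c + 1 := by positivity
      field_simp
      try ring
    have hterm : ∀ j : ℕ, q (j+1+1) * (q (j+1+2) * q (j+1+3))
        = ENNReal.ofReal (a^3 * (1 / ((c+j) * (c+j+1) * (c+j+2)))) := by
      intro j
      have e1 : j+1+1 = j+2 := rfl
      have e2 : j+1+2 = (j+1)+2 := rfl
      have e3 : j+1+3 = (j+2)+2 := rfl
      rw [e1, e2, e3, hq2 j, hq2 (j+1), hq2 (j+2),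
        ← ENNReal.ofReal_mul (by positivity), ← ENNReal.ofReal_mul (by positivity)]
      congr 1
      have d1 : (0:ℝ) < c + j := by positivity
      have d2 : (0:ℝ) < c + j + 1 := by positivity
      have d3 : (0:ℝ) < c + j + 2 := by positivity
      push_cast
      rw [show c + ((j:ℝ)+1) = c + j + 1 by ring, show c + ((j:ℝ)+2) = c + j + 2 by ring]
      field_simp
      try ring
    rw [h0]
    simp_rw [hterm]
    rw [tsum_ofReal_hasSum ((hasSum_three c hc).mul_left (a^3)) (fun n => by positivity)]
    rw [← ENNReal.ofReal_add (by positivity) (by positivity)]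
  have htailB : ∀ m : ℕ, (∑' k : ℕ, q (m+3+k) * q (m+4+k))
      = ENNReal.ofReal (a^2 * (1 / (c + m + 1))) := by
    intro m
    have hx : (0:ℝ) < c + m + 1 := by positivity
    have hterm : ∀ k : ℕ, q (m+3+k) * q (m+4+k)
        = ENNReal.ofReal (a^2 * (1 / (((c+m+1) + k) * ((c+m+1) + k + 1)))) := by
      intro k
      have e1 : m+3+k = (m+1+k)+2 := by omega
      have e2 : m+4+k = (m+2+k)+2 := by omega
      rw [e1, e2, hq2, hq2, ← ENNReal.ofReal_mul (by positivity)]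
      congr 1
      have d1 : (0:ℝ) < c + m + 1 + k := by positivity
      have d2 : (0:ℝ) < c + m + 1 + k + 1 := by positivity
      push_cast
      rw [show c + ((m:ℝ)+1+k) = c + m + 1 + k by ring,
        show c + ((m:ℝ)+2+k) = c + m + 1 + k + 1 by ring]
      field_simp
      try ring
    simp_rw [hterm]
    exact tsum_ofReal_hasSum ((hasSum_two _ hx).mul_left (a^2)) (fun n => by positivity)
  have hB : (∑' m : ℕ, ∑' k : ℕ, F m (m+2+k))
      = ENNReal.ofReal (a^3 * (1 / (c * (c+1))) + a^4 * (1 / (2 * c * (c+1)))) := by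
    have hinner : ∀ m : ℕ, (∑' k : ℕ, F m (m+2+k))
        = q (m+1) * (q (m+2) * ENNReal.ofReal (a^2 * (1 / (c + m + 1)))) := by
      intro m
      simp_rw [hFfar m]
      rw [ENNReal.tsum_mul_left, ENNReal.tsum_mul_left, htailB m]
    simp_rw [hinner]
    rw [tsum_eq_zero_add' ENNReal.summable]
    have h0 : q (0+1) * (q (0+2) * ENNReal.ofReal (a^2 * (1 / (c + (0:ℕ) + 1))))
        = ENNReal.ofReal (a^3 * (1 / (c * (c+1)))) := by
      norm_num [hq1, hq2']
      rw [← ENNReal.ofReal_mul (by positivity)]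
      congr 1
      have d1 : (0:ℝ) < c := hc
      have d2 : (0:ℝ) < c + 1 := by positivity
      field_simp
      try ring
    have hterm : ∀ j : ℕ, q (j+1+1) * (q (j+1+2) * ENNReal.ofReal (a^2 * (1 / (c + (j+1:ℕ) + 1))))
        = ENNReal.ofReal (a^4 * (1 / ((c+j) * (c+j+1) * (c+j+2)))) := by
      intro j
      have e1 : j+1+1 = j+2 := rfl
      have e2 : j+1+2 = (j+1)+2 := rfl
      rw [e1, e2, hq2 j, hq2 (j+1),
        ← ENNReal.ofReal_mul (by positivity), ← ENNReal.ofReal_mul (by positivity)]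
      congr 1
      have d1 : (0:ℝ) < c + j := by positivity
      have d2 : (0:ℝ) < c + j + 1 := by positivity
      have d3 : (0:ℝ) < c + j + 2 := by positivity
      push_cast
      rw [show c + ((j:ℝ)+1) + 1 = c + j + 2 by ring, show c + ((j:ℝ)+1) = c + j + 1 by ring]
      field_simp
      try ring
    rw [h0]
    simp_rw [hterm]
    rw [tsum_ofReal_hasSum ((hasSum_three c hc).mul_left (a^4)) (fun n => by positivity)]
    rw [← ENNReal.ofReal_add (by positivity) (by positivity)]
  -- splitting the double sum
  have step1 : ∀ m : ℕ, (∑' n : ℕ, F m n)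
      = (∑ i ∈ Finset.range m, F m i)
        + (F m m + (F m (m+1) + ∑' k : ℕ, F m (m+2+k))) := by
    intro m
    rw [← Summable.sum_add_tsum_nat_add' (f := F m) (k := m) ENNReal.summable]
    congr 1
    rw [tsum_eq_zero_add' ENNReal.summable]
    congr 1
    · rw [show 0 + m = m by omega]
    rw [tsum_eq_zero_add' ENNReal.summable]
    congr 1
    · rw [show 0 + 1 + m = m + 1 by omega]
    · exact tsum_congr fun k => by rw [show k + 1 + 1 + m = m + 2 + k by omega]
  have hL : (∑' m : ℕ, ∑ i ∈ Finset.range m, F m i)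
      = (∑' m : ℕ, F m (m+1)) + ∑' m : ℕ, ∑' k : ℕ, F m (m+2+k) := by
    have e1 : ∀ m : ℕ, (∑ i ∈ Finset.range m, F m i)
        = ∑' i : ℕ, if i < m then F m i else 0 := by
      intro m
      rw [tsum_eq_sum (s := Finset.range m) (fun b hb => if_neg (by simpa using hb))]
      exact Finset.sum_congr rfl fun i hi => (if_pos (Finset.mem_range.1 hi)).symm
    simp_rw [e1]
    rw [ENNReal.tsum_comm]
    have e2 : ∀ i : ℕ, (∑' m : ℕ, if i < m then F m i else 0)
        = ∑' k : ℕ, F (k+i+1) i := by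
      intro i
      rw [← Summable.sum_add_tsum_nat_add'
        (f := fun m => if i < m then F m i else 0) (k := i+1) ENNReal.summable]
      have hz : (∑ m ∈ Finset.range (i+1), if i < m then F m i else 0) = 0 :=
        Finset.sum_eq_zero fun m hm => if_neg (by
          have := Finset.mem_range.1 hm; omega)
      rw [hz, zero_add]
      exact tsum_congr fun k => by rw [if_pos (by omega), show k + (i+1) = k + i + 1 by omega]
    simp_rw [e2]
    have e3 : ∀ i k : ℕ, F (k+i+1) i = F i (i+1+k) := by
      intro i k
      rw [hFsymm]
      rw [show k + i + 1 = i + 1 + k by omega]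
    simp_rw [e3]
    have e4 : ∀ i : ℕ, (∑' k : ℕ, F i (i+1+k)) = F i (i+1) + ∑' k : ℕ, F i (i+2+k) := by
      intro i
      rw [tsum_eq_zero_add' ENNReal.summable]
      congr 1
      exact tsum_congr fun k => by rw [show i + 1 + (k + 1) = i + 2 + k by omega]
    simp_rw [e4]
    rw [ENNReal.tsum_add]
  have hTotal : (∑' m : ℕ, ∑' n : ℕ, F m n)
      = (∑' m : ℕ, F m m)
        + 2 * ((∑' m : ℕ, F m (m+1)) + ∑' m : ℕ, ∑' k : ℕ, F m (m+2+k)) := by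
    simp_rw [step1]
    rw [ENNReal.tsum_add, ENNReal.tsum_add, ENNReal.tsum_add, hL]
    ring
  -- part 1
  have part1 : (∫⁻ ω, (∑' n : ℕ, ((Y (n + 1) ω * Y (n + 2) ω : ℕ) : ℝ≥0∞)) ∂μ)
      = ENNReal.ofReal (a * (a + 1) / c) := by
    have hcast : ∀ (n : ℕ) (ω : Ω), ((Y (n + 1) ω * Y (n + 2) ω : ℕ) : ℝ≥0∞)
        = X (n+1) ω * X (n+2) ω := by
      intro n ω; rw [hXdef]; push_cast; rfl
    calc (∫⁻ ω, (∑' n : ℕ, ((Y (n + 1) ω * Y (n + 2) ω : ℕ) : ℝ≥0∞)) ∂μ)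
        = ∫⁻ ω, (∑' n : ℕ, X (n+1) ω * X (n+2) ω) ∂μ := by
          exact lintegral_congr fun ω => tsum_congr fun n => hcast n ω
      _ = ∑' n : ℕ, ∫⁻ ω, X (n+1) ω * X (n+2) ω ∂μ :=
          lintegral_tsum fun n => ((hXm (n+1)).mul (hXm (n+2))).aemeasurable
      _ = ∑' n : ℕ, q (n+1) * q (n+2) := tsum_congr fun n => I2 _ _ (by omega)
      _ = ENNReal.ofReal (a * (a + 1) / c) := hD
  -- part 2
  have part2 : (∫⁻ ω, (∑' n : ℕ, ((Y (n + 1) ω * Y (n + 2) ω : ℕ) : ℝ≥0∞)) ^ 2 ∂μ)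
      = ENNReal.ofReal (a * (a + 1) / c + a ^ 2 * (a + 1) * (a + 2) / (c * (c + 1))) := by
    have hcast : ∀ (n : ℕ) (ω : Ω), ((Y (n + 1) ω * Y (n + 2) ω : ℕ) : ℝ≥0∞)
        = X (n+1) ω * X (n+2) ω := by
      intro n ω; rw [hXdef]; push_cast; rfl
    calc (∫⁻ ω, (∑' n : ℕ, ((Y (n + 1) ω * Y (n + 2) ω : ℕ) : ℝ≥0∞)) ^ 2 ∂μ)
        = ∫⁻ ω, ∑' p : ℕ × ℕ,
            (X (p.1+1) ω * X (p.1+2) ω) * (X (p.2+1) ω * X (p.2+2) ω) ∂μ := by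
          apply lintegral_congr
          intro ω
          rw [show (∑' n : ℕ, ((Y (n + 1) ω * Y (n + 2) ω : ℕ) : ℝ≥0∞))
              = ∑' n : ℕ, X (n+1) ω * X (n+2) ω from tsum_congr fun n => hcast n ω]
          rw [pow_two, ENNReal.tsum_prod']
          calc (∑' n : ℕ, X (n+1) ω * X (n+2) ω) * (∑' n : ℕ, X (n+1) ω * X (n+2) ω)
              = ∑' m : ℕ, (X (m+1) ω * X (m+2) ω) * (∑' n : ℕ, X (n+1) ω * X (n+2) ω) :=
                ENNReal.tsum_mul_right.symm
            _ = ∑' (m : ℕ) (n : ℕ), (X (m+1) ω * X (m+2) ω) * (X (n+1) ω * X (n+2) ω) :=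
                tsum_congr fun m => ENNReal.tsum_mul_left.symm
      _ = ∑' p : ℕ × ℕ, F p.1 p.2 := by
          rw [hFdef]
          exact lintegral_tsum (f := fun (p : ℕ × ℕ) ω => X (p.1+1) ω * X (p.1+2) ω * (X (p.2+1) ω * X (p.2+2) ω)) fun p =>
            (((hXm (p.1+1)).fun_mul (hXm (p.1+2))).fun_mul ((hXm (p.2+1)).fun_mul (hXm (p.2+2)))).aemeasurable
      _ = ∑' m : ℕ, ∑' n : ℕ, F m n := ENNReal.tsum_prod'
      _ = (∑' m : ℕ, F m m)
            + 2 * ((∑' m : ℕ, F m (m+1)) + ∑' m : ℕ, ∑' k : ℕ, F m (m+2+k)) := hTotal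
      _ = ENNReal.ofReal (a * (a + 1) / c + a ^ 2 * (a + 1) * (a + 2) / (c * (c + 1))) := by
          simp_rw [hFdiag]
          rw [hD, hA, hB]
          rw [show (2:ℝ≥0∞) = ENNReal.ofReal 2 by norm_num]
          rw [← ENNReal.ofReal_add (by positivity) (by positivity),
            ← ENNReal.ofReal_mul (by positivity),
            ← ENNReal.ofReal_add (by positivity) (by positivity)]
          congr 1
          have d2 : (0:ℝ) < c + 1 := by positivity
          field_simp
          ring
  refine ⟨part1, part2, ?_⟩
  have d2 : (0:ℝ) < a + b + 1 := hc1
  have d1 : (0:ℝ) < a + b := hc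
  field_simp
  ring
end

section
/- In Bern(a,b) with a>0, b>0: for each n≥2, the probability that the second 1 in Bern_1(a,b) occurs at time n equals p_n, where p_2 = a/(a+b) and p_n = [a/(a+b+n−2)]·∏_{r=0}^{n−3}(b+r)/(a+b+r) for n≥3, and Σ_{n≥2} p_n = 1. -/
open Finset Filter

/-- In `Bern₁(a,b)` with `a > 0`, `b > 0` (the independent Bernoulli sequence with
`P(Y_1=1) = 1` and `P(Y_n=1) = a/(a+b+n-2)` for `n ≥ 2`): for each `n ≥ 2`, the
probability that the second 1 occurs at time `n`, i.e.
`P(Y_2 = ⋯ = Y_{n-1} = 0, Y_n = 1) = ∏_{t=2}^{n-1} (b+t-2)/(a+b+t-2) · a/(a+b+n-2)`,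
equals `p_n`, where `p_2 = a/(a+b)` and `p_n = [a/(a+b+n-2)] ∏_{r=0}^{n-3} (b+r)/(a+b+r)`
for `n ≥ 3`; and `∑_{n ≥ 2} p_n = 1` (below the sum is reindexed by `m = n - 2`). -/
theorem stmt13 (a b : ℝ) (ha : 0 < a) (hb : 0 < b) :
    (∀ n : ℕ, 2 ≤ n →
      (∏ t ∈ Finset.Icc 2 (n - 1), ((b + (t : ℝ) - 2) / (a + b + (t : ℝ) - 2))) *
          (a / (a + b + (n : ℝ) - 2))
        = (a / (a + b + (n : ℝ) - 2)) *
            ∏ r ∈ Finset.range (n - 2), ((b + (r : ℝ)) / (a + b + (r : ℝ))))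
    ∧ ∑' m : ℕ, (a / (a + b + (m : ℝ))) *
          ∏ r ∈ Finset.range m, ((b + (r : ℝ)) / (a + b + (r : ℝ))) = 1 := by
  have hden : ∀ m : ℕ, (0:ℝ) < a + b + m := fun m => by positivity
  have hnum : ∀ m : ℕ, (0:ℝ) < b + m := fun m => by positivity
  set Q : ℕ → ℝ := fun m => ∏ r ∈ Finset.range m, ((b + (r : ℝ)) / (a + b + (r : ℝ)))
    with hQ
  have hQpos : ∀ m, 0 < Q m := fun m =>
    Finset.prod_pos fun r _ => div_pos (hnum r) (hden r)
  constructor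
  · intro n hn
    have h1 : Finset.Icc 2 (n - 1) = Finset.Ico 2 n := by
      rw [← Finset.Ico_add_one_right_eq_Icc]
      congr 1
      omega
    rw [h1, Finset.prod_Ico_eq_prod_range, mul_comm]
    congr 1
    apply Finset.prod_congr rfl
    intro r _
    push_cast
    congr 1 <;> ring
  · -- telescoping
    have hterm : ∀ m : ℕ, (a / (a + b + (m : ℝ))) * Q m = Q m - Q (m + 1) := by
      intro m
      have h : Q (m + 1) = Q m * ((b + m) / (a + b + m)) :=
        Finset.prod_range_succ _ m
      have hx : a / (a + b + (m:ℝ)) = 1 - (b + m) / (a + b + m) := by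
        rw [eq_sub_iff_add_eq, ← add_div, div_eq_one_iff_eq (hden m).ne']
        ring
      rw [h, hx]
      ring
    have hpartial : ∀ N : ℕ,
        ∑ m ∈ Finset.range N, (a / (a + b + (m : ℝ))) * Q m = 1 - Q N := by
      intro N
      calc ∑ m ∈ Finset.range N, (a / (a + b + (m : ℝ))) * Q m
          = ∑ m ∈ Finset.range N, (Q m - Q (m + 1)) :=
            Finset.sum_congr rfl fun m _ => hterm m
        _ = Q 0 - Q N := Finset.sum_range_sub' Q N
        _ = 1 - Q N := by simp [hQ]
    -- Q N ≤ 1 / (1 + a * S N) where S N = ∑ 1/(b+r)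
    set S : ℕ → ℝ := fun N => ∑ r ∈ Finset.range N, 1 / (b + (r : ℝ)) with hS
    have hSnn : ∀ N, 0 ≤ S N := fun N =>
      Finset.sum_nonneg fun r _ => by positivity
    have hinv : ∀ N, 1 + a * S N ≤ (Q N)⁻¹ := by
      intro N
      induction N with
      | zero => simp [hQ, hS]
      | succ N ih =>
        have hQN : Q (N + 1) = Q N * ((b + N) / (a + b + N)) :=
          Finset.prod_range_succ _ N
        have h1 : (Q (N+1))⁻¹ = (Q N)⁻¹ * ((a + b + N) / (b + N)) := by
          rw [hQN, mul_inv, inv_div]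
        have h2 : (a + b + (N:ℝ)) / (b + N) = 1 + a / (b + N) := by
          field_simp
          ring
        have hstep : (1 + a * S N) * (1 + a / (b + N)) ≤ (Q (N+1))⁻¹ := by
          rw [h1, h2]
          apply mul_le_mul_of_nonneg_right ih
          have := hnum N
          positivity
        refine le_trans ?_ hstep
        have hSsucc : S (N + 1) = S N + 1 / (b + N) := by
          simp [hS, Finset.sum_range_succ]
        rw [hSsucc]
        have h3 : (0:ℝ) ≤ a * S N * (a / (b + N)) := by
          have := hSnn N; have := hnum N; positivity
        have hexp : (1 + a * S N) * (1 + a / (b + (N:ℝ)))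
            = 1 + a * S N + a / (b + N) + a * S N * (a / (b + N)) := by ring
        have hcast : a * (1 / (b + (N:ℝ))) = a / (b + N) := by ring
        rw [hexp]
        linarith [h3, hcast.ge, hcast.le]
    have hQle : ∀ N, Q N ≤ (1 + a * S N)⁻¹ := by
      intro N
      have h1 : (0:ℝ) < 1 + a * S N := by have := hSnn N; positivity
      rw [← inv_inv (Q N)]
      exact inv_anti₀ h1 (hinv N)
    -- S N → ∞
    have hSdiv : Tendsto S atTop atTop := by
      have hns : ¬ Summable (fun r : ℕ => 1 / (b + (r : ℝ))) := by
        intro h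
        have h2 : Summable (fun r : ℕ => 1 / ((b + 1) * ((r : ℝ) + 1))) := by
          apply h.of_nonneg_of_le (fun r => by positivity)
          intro r
          apply one_div_le_one_div_of_le (hnum r)
          nlinarith [Nat.cast_nonneg (α := ℝ) r, hb]
        have h3 : Summable (fun r : ℕ => 1 / ((r : ℝ) + 1)) := by
          have := h2.mul_left (b + 1)
          convert this using 2 with r
          · rfl
          field_simp
        apply Real.not_summable_one_div_natCast
        rw [← summable_nat_add_iff 1]
        convert h3 using 2 with r
        · rfl
        push_cast
        ring
      rw [hS, ← not_summable_iff_tendsto_nat_atTop_of_nonneg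
        (fun r => by positivity : ∀ r : ℕ, (0:ℝ) ≤ 1 / (b + r))]
      exact hns
    have hQ0 : Tendsto Q atTop (nhds 0) := by
      have h1 : Tendsto (fun N => (1 + a * S N)⁻¹) atTop (nhds 0) := by
        apply Tendsto.comp tendsto_inv_atTop_zero
        apply tendsto_atTop_add_const_left
        exact Tendsto.const_mul_atTop ha hSdiv
      exact squeeze_zero (fun N => (hQpos N).le) hQle h1
    have : HasSum (fun m : ℕ => (a / (a + b + (m : ℝ))) * Q m) 1 := by
      rw [hasSum_iff_tendsto_nat_of_nonneg
        (fun m => mul_nonneg (by positivity) (hQpos m).le)]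
      simp_rw [hpartial]
      have : Tendsto (fun N => 1 - Q N) atTop (nhds (1 - 0)) :=
        tendsto_const_nhds.sub hQ0
      simpa using this
    exact this.tsum_eq
end
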